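/- arXiv:1207.5722 — 8 statements merged into one kernel-verified Lean document; each statement's English description precedes it below -/
import Mathlib

section
/- Let G=(V,E) be an undirected graph, let T ⊆ V have even cardinality, let F be a multiset of edges of G, and let D be the set of wrong-degree nodes with respect to F and T (nodes of T with even degree in F and nodes of V∖T with odd degree in F). If U ⊆ V satisfies that both |U ∩ T| and |U ∩ D| are odd, then the number |δ_F(U)| of edges of F (counted with multiplicity) with exactly one endpoint in U is even. -/
open Finset
open scoped Classical

variable {V : Type*}

/-- The cut of a multiset of edges `F` (given by multiplicities on `Sym2 V`) across the
vertex set `U`: the number of edges, counted with multiplicity, with exactly one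
endpoint in `U`. -/
def mCut [Fintype V] [DecidableEq V] (F : Sym2 V → ℕ) (U : Finset V) : ℕ :=
  ∑ u ∈ U, ∑ w ∈ Uᶜ, F s(u, w)

/-- The degree of a vertex `v` in the multiset of edges `F`. -/
def mDeg [Fintype V] (F : Sym2 V → ℕ) (v : V) : ℕ :=
  ∑ w : V, F s(v, w)

lemma even_cast_zmod2 {n : ℕ} : Even n ↔ (n : ZMod 2) = 0 := by
  rw [even_iff_two_dvd, ← ZMod.natCast_eq_zero_iff]

lemma odd_cast_zmod2 {n : ℕ} (h : Odd n) : (n : ZMod 2) = 1 := by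
  obtain ⟨k, rfl⟩ := h
  push_cast
  rw [show (2 : ZMod 2) = 0 from by decide]
  ring

theorem stmt1 {V : Type*} [Fintype V] [DecidableEq V]
    (G : SimpleGraph V) (T : Finset V) (hT : Even T.card)
    (F : Sym2 V → ℕ) (hsupp : ∀ e, F e ≠ 0 → e ∈ G.edgeSet)
    (D : Finset V)
    (hD : ∀ v, v ∈ D ↔ ((v ∈ T ∧ Even (mDeg F v)) ∨ (v ∉ T ∧ Odd (mDeg F v))))
    (U : Finset V)
    (hUT : Odd ((U ∩ T).card)) (hUD : Odd ((U ∩ D).card)) :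
    Even (mCut F U) := by
  rw [even_cast_zmod2]
  have hdiag : ∀ u : V, F s(u, u) = 0 := by
    intro u
    by_contra h
    exact G.irrefl ((SimpleGraph.mem_edgeSet G).mp (hsupp _ h))
  -- inner (within-U) sum is zero mod 2
  have hA : (∑ u ∈ U, ∑ w ∈ U, (F s(u, w) : ZMod 2)) = 0 := by
    rw [← Finset.sum_product']
    refine Finset.sum_involution (fun p _ => p.swap) ?_ ?_ ?_ ?_
    · intro p _
      have : s(p.2, p.1) = s(p.1, p.2) := Sym2.eq_swap
      simp [Prod.swap, this, CharTwo.add_self_eq_zero]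
    · intro p _ hne heq
      apply hne
      have h12 : p.1 = p.2 := by
        have := congrArg Prod.fst heq
        simpa [Prod.swap] using this.symm
      simp [Prod.swap, ← h12, hdiag p.1]
    · intro p hp
      simp only [Finset.mem_product] at hp ⊢
      exact ⟨hp.2, hp.1⟩
    · intro p _; simp
  have hsplit : (∑ u ∈ U, (mDeg F u : ZMod 2))
      = (∑ u ∈ U, ∑ w ∈ U, (F s(u, w) : ZMod 2)) + (mCut F U : ZMod 2) := by
    rw [mCut]
    push_cast
    rw [← Finset.sum_add_distrib]
    refine Finset.sum_congr rfl fun u _ => ?_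
    rw [mDeg, ← Finset.sum_add_sum_compl U]
    push_cast
    ring
  have hcut : (mCut F U : ZMod 2) = ∑ u ∈ U, (mDeg F u : ZMod 2) := by
    rw [hsplit, hA, zero_add]
  rw [hcut]
  have hdeg : ∀ u : V, (mDeg F u : ZMod 2)
      = (if u ∈ T then 1 else 0) + (if u ∈ D then 1 else 0) := by
    intro u
    by_cases hut : u ∈ T <;> by_cases hud : u ∈ D <;>
      simp only [hut, hud, if_true, if_false]
    · have := ((hD u).mp hud).resolve_right (fun h => h.1 hut)
      rw [even_cast_zmod2.mp this.2]; decide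
    · have : Odd (mDeg F u) := by
        rcases Nat.even_or_odd (mDeg F u) with he | ho
        · exact absurd ((hD u).mpr (Or.inl ⟨hut, he⟩)) hud
        · exact ho
      rw [odd_cast_zmod2 this, add_zero]
    · have := ((hD u).mp hud).resolve_left (fun h => hut h.1)
      rw [odd_cast_zmod2 this.2, zero_add]
    · have : Even (mDeg F u) := by
        rcases Nat.even_or_odd (mDeg F u) with he | ho
        · exact he
        · exact absurd ((hD u).mpr (Or.inr ⟨hut, ho⟩)) hud
      rw [even_cast_zmod2.mp this]; decide
  simp_rw [hdeg]
  rw [Finset.sum_add_distrib, Finset.sum_boole, Finset.sum_boole]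
  rw [Finset.filter_mem_eq_inter, Finset.filter_mem_eq_inter]
  rw [odd_cast_zmod2 hUT, odd_cast_zmod2 hUD]
  decide
end

section
/- Let G=(V,E) be a complete graph on at least two vertices with nonnegative edge costs c satisfying the triangle inequality (a metric graph), and let T ⊆ V be a nonempty set of even cardinality. Then for every connected T-join F of G there exists a spanning tree J of G that is itself a connected T-join (every node of T has odd degree in J and every node of V∖T has even degree in J) with cost c(J) ≤ c(F). -/
open Finset
open scoped Classical

variable {V : Type*}

/-- The simple graph underlying a multiset of edges `F`: `u` and `w` are adjacent iff
`u ≠ w` and the edge `{u,w}` has positive multiplicity in `F`. -/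
def fromMultiset (F : Sym2 V → ℕ) : SimpleGraph V where
  Adj u w := u ≠ w ∧ F s(u, w) ≠ 0
  symm := ⟨fun u w h => ⟨h.1.symm, by rw [Sym2.eq_swap]; exact h.2⟩⟩
  loopless := ⟨fun v h => h.1 rfl⟩

/-- The cost of a multiset of edges `F` with respect to edge costs `c`
(each unordered pair is counted exactly once). -/
noncomputable def mCost [Fintype V] (c : Sym2 V → ℝ) (F : Sym2 V → ℕ) : ℝ :=
  (∑ u : V, ∑ w : V, (F s(u, w) : ℝ) * c s(u, w)) / 2

/-- The cost of (the edge set of) a simple graph `J` with respect to edge costs `c`. -/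
noncomputable def tCost [Fintype V] (c : Sym2 V → ℝ) (J : SimpleGraph V) : ℝ :=
  (∑ u : V, ∑ w : V, if J.Adj u w then c s(u, w) else 0) / 2

/-- The degree of a vertex `v` in a simple graph `J`. -/
noncomputable def treeDeg (J : SimpleGraph V) (v : V) : ℕ :=
  Nat.card {w // J.Adj v w}

section Helpers
variable [Fintype V] [DecidableEq V]
set_option linter.unusedSectionVars false

lemma conn_of {S S' : SimpleGraph V} (h : S.Connected)
    (hrep : ∀ a b, S.Adj a b → S'.Reachable a b) : S'.Connected := by
  have hne : Nonempty V := h.nonempty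
  rw [SimpleGraph.connected_iff]
  refine ⟨fun a b => ?_, hne⟩
  obtain ⟨p⟩ := h.preconnected a b
  induction p with
  | nil => exact SimpleGraph.Reachable.refl _
  | cons h' p ih => exact (hrep _ _ h').trans ih

lemma sum_sym2_ind {M : Type*} [AddCommMonoid M] (a b v : V) (hab : a ≠ b) (r : M) :
    (∑ z : V, if s(v, z) = s(a, b) then r else 0) = if v = a ∨ v = b then r else 0 := by
  rcases eq_or_ne v a with rfl | hva
  · rw [if_pos (Or.inl rfl)]
    have h1 : ∀ z : V, (if s(v, z) = s(v, b) then r else 0) = (if z = b then r else 0) := by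
      intro z
      congr 1
      exact propext Sym2.congr_right
    rw [Finset.sum_congr rfl fun z _ => h1 z, Finset.sum_ite_eq' Finset.univ b fun _ => r,
      if_pos (Finset.mem_univ b)]
  · rcases eq_or_ne v b with rfl | hvb
    · rw [if_pos (Or.inr rfl)]
      have h1 : ∀ z : V, (if s(v, z) = s(a, v) then r else 0) = (if z = a then r else 0) := by
        intro z
        congr 1
        rw [show s(a, v) = s(v, a) from Sym2.eq_swap]
        exact propext Sym2.congr_right
      rw [Finset.sum_congr rfl fun z _ => h1 z, Finset.sum_ite_eq' Finset.univ a fun _ => r,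
        if_pos (Finset.mem_univ a)]
    · rw [if_neg (by tauto)]
      refine Finset.sum_eq_zero fun z _ => ?_
      rw [if_neg]
      rw [Sym2.eq_iff]
      tauto

lemma sum_sym2_cost (c : Sym2 V → ℝ) (a b : V) (hab : a ≠ b) :
    (∑ u : V, ∑ z : V, if s(u, z) = s(a, b) then c s(u, z) else 0) = 2 * c s(a, b) := by
  have h1 : ∀ u z : V, (if s(u, z) = s(a, b) then c s(u, z) else 0)
      = (if s(u, z) = s(a, b) then c s(a, b) else 0) := by
    intro u z
    split_ifs with h
    · rw [h]
    · rfl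
  calc (∑ u : V, ∑ z : V, if s(u, z) = s(a, b) then c s(u, z) else 0)
      = ∑ u : V, ∑ z : V, if s(u, z) = s(a, b) then c s(a, b) else 0 := by
        exact Finset.sum_congr rfl fun u _ => Finset.sum_congr rfl fun z _ => h1 u z
    _ = ∑ u : V, if u = a ∨ u = b then c s(a, b) else 0 := by
        exact Finset.sum_congr rfl fun u _ => sum_sym2_ind a b u hab _
    _ = 2 * c s(a, b) := by
        have : ∀ u : V, (if u = a ∨ u = b then c s(a, b) else 0)
            = (if u ∈ ({a, b} : Finset V) then c s(a, b) else 0) := by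
          intro u; simp [Finset.mem_insert]
        rw [Finset.sum_congr rfl fun u _ => this u]
        rw [Finset.sum_ite_mem, Finset.univ_inter, Finset.sum_pair hab]
        ring

end Helpers
section Move
variable [Fintype V] [DecidableEq V]

def moveF (F : Sym2 V → ℕ) (w x y : V) : Sym2 V → ℕ := fun e =>
  if e = s(w, x) then F e - 1 else if e = s(w, y) then F e - 1
  else if e = s(x, y) then F e + 1 else F e

variable {F : Sym2 V → ℕ} {w x y : V}

omit [Fintype V] [DecidableEq V] in
lemma sym2_ne1 (hxy : x ≠ y) : s(w, x) ≠ s(w, y) := by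
  rw [Ne, Sym2.eq_iff]; rintro (⟨-, h⟩ | ⟨h1, h2⟩)
  · exact hxy h
  · exact hxy (h2.trans h1)

omit [Fintype V] [DecidableEq V] in
lemma sym2_ne2 (hwx : w ≠ x) (hwy : w ≠ y) : s(w, x) ≠ s(x, y) := by
  rw [Ne, Sym2.eq_iff]; rintro (⟨h1, h2⟩ | ⟨h1, -⟩)
  · exact hwx h1
  · exact hwy h1

omit [Fintype V] [DecidableEq V] in
lemma sym2_ne3 (hwx : w ≠ x) (hwy : w ≠ y) : s(w, y) ≠ s(x, y) := by
  rw [Ne, Sym2.eq_iff]; rintro (⟨h1, -⟩ | ⟨h1, -⟩)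
  · exact hwx h1
  · exact hwy h1

omit [Fintype V] in
lemma moveF_wx : moveF F w x y s(w, x) = F s(w, x) - 1 := by
  simp [moveF]

omit [Fintype V] in
lemma moveF_wy (hxy : x ≠ y) (hwx : w ≠ x) (hwy : w ≠ y) :
    moveF F w x y s(w, y) = F s(w, y) - 1 := by
  simp [moveF, Sym2.eq_iff, Ne.symm hwx, Ne.symm hwy, hxy, hwx, hwy, hxy.symm]

omit [Fintype V] in
lemma moveF_xy (hxy : x ≠ y) (hwx : w ≠ x) (hwy : w ≠ y) :
    moveF F w x y s(x, y) = F s(x, y) + 1 := by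
  simp [moveF, Sym2.eq_iff, Ne.symm hwx, Ne.symm hwy, hxy, hwx, hwy, hxy.symm]

omit [Fintype V] in
lemma moveF_untouched (e : Sym2 V) (hA : e ≠ s(w, x)) (hB : e ≠ s(w, y)) :
    F e ≤ moveF F w x y e := by
  rw [moveF]
  simp only [if_neg hA, if_neg hB]
  split_ifs <;> omega

omit [Fintype V] in
lemma moveF_key (hxy : x ≠ y) (hwx : w ≠ x) (hwy : w ≠ y)
    (h1 : F s(w, x) ≠ 0) (h2 : F s(w, y) ≠ 0) (e : Sym2 V) :
    moveF F w x y e + ((if e = s(w, x) then 1 else 0) + (if e = s(w, y) then 1 else 0))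
      = F e + (if e = s(x, y) then 1 else 0) := by
  rcases eq_or_ne e s(w, x) with rfl | hA
  · rw [moveF_wx, if_pos rfl, if_neg (sym2_ne1 hxy), if_neg (sym2_ne2 hwx hwy)]
    omega
  rcases eq_or_ne e s(w, y) with rfl | hB
  · rw [moveF_wy hxy hwx hwy, if_neg (sym2_ne1 hxy).symm, if_pos rfl,
      if_neg (sym2_ne3 hwx hwy)]
    omega
  rcases eq_or_ne e s(x, y) with rfl | hC
  · rw [moveF_xy hxy hwx hwy, if_neg hA, if_neg hB, if_pos rfl]
  · rw [show moveF F w x y e = F e by rw [moveF]; simp [hA, hB, hC], if_neg hA, if_neg hB,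
      if_neg hC]

lemma moveF_deg (hxy : x ≠ y) (hwx : w ≠ x) (hwy : w ≠ y)
    (h1 : F s(w, x) ≠ 0) (h2 : F s(w, y) ≠ 0) (v : V) :
    mDeg (moveF F w x y) v + ((if v = w ∨ v = x then 1 else 0) + (if v = w ∨ v = y then 1 else 0))
      = mDeg F v + (if v = x ∨ v = y then 1 else 0) := by
  unfold mDeg
  rw [← sum_sym2_ind w x v hwx 1, ← sum_sym2_ind w y v hwy 1, ← sum_sym2_ind x y v hxy 1,
    ← Finset.sum_add_distrib, ← Finset.sum_add_distrib, ← Finset.sum_add_distrib]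
  exact Finset.sum_congr rfl fun z _ => moveF_key hxy hwx hwy h1 h2 s(v, z)

lemma moveF_parity (hxy : x ≠ y) (hwx : w ≠ x) (hwy : w ≠ y)
    (h1 : F s(w, x) ≠ 0) (h2 : F s(w, y) ≠ 0) (v : V) :
    Odd (mDeg (moveF F w x y) v) ↔ Odd (mDeg F v) := by
  have h := moveF_deg hxy hwx hwy h1 h2 v
  rw [Nat.odd_iff, Nat.odd_iff]
  rcases eq_or_ne v w with rfl | hvw
  · rw [if_pos (Or.inl rfl), if_pos (Or.inl rfl),
      if_neg (by rintro (h' | h') <;> [exact hwx h'; exact hwy h'])] at h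
    omega
  rcases eq_or_ne v x with rfl | hvx
  · rw [if_pos (Or.inr rfl), if_neg (by rintro (h' | h') <;> [exact hvw h'; exact hxy h']),
      if_pos (Or.inl rfl)] at h
    omega
  rcases eq_or_ne v y with rfl | hvy
  · rw [if_neg (by rintro (h' | h') <;> [exact hvw h'; exact hvx h']), if_pos (Or.inr rfl),
      if_pos (Or.inr rfl)] at h
    omega
  · rw [if_neg (by rintro (h' | h') <;> [exact hvw h'; exact hvx h']),
      if_neg (by rintro (h' | h') <;> [exact hvw h'; exact hvy h']),
      if_neg (by rintro (h' | h') <;> [exact hvx h'; exact hvy h'])] at h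
    omega

lemma moveF_total (hxy : x ≠ y) (hwx : w ≠ x) (hwy : w ≠ y)
    (h1 : F s(w, x) ≠ 0) (h2 : F s(w, y) ≠ 0) :
    ∑ e : Sym2 V, moveF F w x y e < ∑ e : Sym2 V, F e := by
  have h := Finset.sum_congr rfl fun (e : Sym2 V) (_ : e ∈ Finset.univ) =>
    moveF_key hxy hwx hwy h1 h2 e
  rw [Finset.sum_add_distrib, Finset.sum_add_distrib, Finset.sum_add_distrib,
    Finset.sum_ite_eq' Finset.univ s(w, x) fun _ => 1,
    Finset.sum_ite_eq' Finset.univ s(w, y) fun _ => 1,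
    Finset.sum_ite_eq' Finset.univ s(x, y) fun _ => 1] at h
  simp only [Finset.mem_univ, if_pos] at h
  omega

lemma moveF_supp (hxy : x ≠ y) (hsupp : ∀ e, F e ≠ 0 → ¬ e.IsDiag) :
    ∀ e, moveF F w x y e ≠ 0 → ¬ e.IsDiag := by
  intro e he
  rw [moveF] at he
  split_ifs at he with hA hB hC
  · exact hsupp e (by omega)
  · exact hsupp e (by omega)
  · rw [hC]; rw [Sym2.mk_isDiag_iff]; exact hxy
  · exact hsupp e he

lemma moveF_cost (c : Sym2 V → ℝ) (hc0 : ∀ e, 0 ≤ c e)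
    (htri : ∀ u v w : V, c s(u, v) ≤ c s(u, w) + c s(w, v))
    (hxy : x ≠ y) (hwx : w ≠ x) (hwy : w ≠ y)
    (h1 : F s(w, x) ≠ 0) (h2 : F s(w, y) ≠ 0) :
    mCost c (moveF F w x y) ≤ mCost c F := by
  have keyR : ∀ e : Sym2 V, ((moveF F w x y e : ℝ) * c e)
      + ((if e = s(w, x) then c e else 0) + (if e = s(w, y) then c e else 0))
      = (F e : ℝ) * c e + (if e = s(x, y) then c e else 0) := by
    intro e
    rcases eq_or_ne e s(w, x) with rfl | hA
    · rw [moveF_wx, if_pos rfl, if_neg (sym2_ne1 hxy), if_neg (sym2_ne2 hwx hwy)]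
      rw [Nat.cast_sub (Nat.one_le_iff_ne_zero.mpr h1)]
      push_cast
      ring
    rcases eq_or_ne e s(w, y) with rfl | hB
    · rw [moveF_wy hxy hwx hwy, if_neg (sym2_ne1 hxy).symm, if_pos rfl,
        if_neg (sym2_ne3 hwx hwy), Nat.cast_sub (Nat.one_le_iff_ne_zero.mpr h2)]
      push_cast
      ring
    rcases eq_or_ne e s(x, y) with rfl | hC
    · rw [moveF_xy hxy hwx hwy, if_neg hA, if_neg hB, if_pos rfl]
      push_cast
      ring
    · rw [show moveF F w x y e = F e by rw [moveF]; simp [hA, hB, hC], if_neg hA, if_neg hB,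
        if_neg hC]
      ring
  unfold mCost
  have hsum := Finset.sum_congr rfl fun (u : V) (_ : u ∈ Finset.univ) =>
    Finset.sum_congr rfl fun (z : V) (_ : z ∈ Finset.univ) => keyR s(u, z)
  simp only [Finset.sum_add_distrib] at hsum
  rw [sum_sym2_cost c w x hwx, sum_sym2_cost c w y hwy, sum_sym2_cost c x y hxy] at hsum
  have htri' : c s(x, y) ≤ c s(w, x) + c s(w, y) := by
    have := htri x y w
    rwa [show s(x, w) = s(w, x) from Sym2.eq_swap] at this
  linarith

end Move

section Drop
variable [Fintype V] [DecidableEq V]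
set_option linter.unusedSectionVars false

def dropTwo (F : Sym2 V → ℕ) (e₀ : Sym2 V) : Sym2 V → ℕ := fun e =>
  if e = e₀ then F e - 2 else F e

variable {F : Sym2 V → ℕ} {u w : V}

lemma dropTwo_key (h3 : 2 ≤ F s(u, w)) (e : Sym2 V) :
    dropTwo F s(u, w) e + (if e = s(u, w) then 2 else 0) = F e := by
  rw [dropTwo]
  split_ifs with h
  · rw [h]; omega
  · rfl

lemma dropTwo_graph (h3 : 3 ≤ F s(u, w)) :
    fromMultiset (dropTwo F s(u, w)) = fromMultiset F := by
  ext a b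
  show a ≠ b ∧ _ ≠ 0 ↔ a ≠ b ∧ _ ≠ 0
  rw [dropTwo]
  split_ifs with h
  · rw [h]; constructor <;> exact fun ⟨h1, h2⟩ => ⟨h1, by omega⟩
  · rfl

lemma dropTwo_parity (huw : u ≠ w) (h3 : 2 ≤ F s(u, w)) (v : V) :
    Odd (mDeg (dropTwo F s(u, w)) v) ↔ Odd (mDeg F v) := by
  have h : mDeg (dropTwo F s(u, w)) v + (if v = u ∨ v = w then 2 else 0) = mDeg F v := by
    unfold mDeg
    rw [← sum_sym2_ind u w v huw 2, ← Finset.sum_add_distrib]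
    exact Finset.sum_congr rfl fun z _ => dropTwo_key h3 s(v, z)
  rw [Nat.odd_iff, Nat.odd_iff]
  split_ifs at h <;> omega

lemma dropTwo_total (h3 : 2 ≤ F s(u, w)) :
    ∑ e : Sym2 V, dropTwo F s(u, w) e < ∑ e : Sym2 V, F e := by
  have h := Finset.sum_congr rfl fun (e : Sym2 V) (_ : e ∈ Finset.univ) => dropTwo_key h3 e
  rw [Finset.sum_add_distrib, Finset.sum_ite_eq' Finset.univ s(u, w) fun _ => 2] at h
  simp only [Finset.mem_univ, if_pos] at h
  have h' : (∑ e : Sym2 V, dropTwo F s(u, w) e) + 2 = ∑ e : Sym2 V, F e := h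
  omega

lemma dropTwo_cost (c : Sym2 V → ℝ) (hc0 : ∀ e, 0 ≤ c e) (e₀ : Sym2 V) :
    mCost c (dropTwo F e₀) ≤ mCost c F := by
  unfold mCost
  have : ∀ a b : V, (dropTwo F e₀ s(a, b) : ℝ) * c s(a, b) ≤ (F s(a, b) : ℝ) * c s(a, b) := by
    intro a b
    apply mul_le_mul_of_nonneg_right _ (hc0 _)
    have : dropTwo F e₀ s(a, b) ≤ F s(a, b) := by rw [dropTwo]; split_ifs <;> omega
    exact_mod_cast this
  have hAB : (∑ a : V, ∑ b : V, (dropTwo F e₀ s(a, b) : ℝ) * c s(a, b))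
      ≤ ∑ a : V, ∑ b : V, (F s(a, b) : ℝ) * c s(a, b) :=
    Finset.sum_le_sum fun a _ => Finset.sum_le_sum fun b _ => this a b
  linarith

lemma dropTwo_supp (hsupp : ∀ e, F e ≠ 0 → ¬ e.IsDiag) (e₀ : Sym2 V) :
    ∀ e, dropTwo F e₀ e ≠ 0 → ¬ e.IsDiag := by
  intro e he
  rw [dropTwo] at he
  split_ifs at he
  · exact hsupp e (by omega)
  · exact hsupp e he

end Drop

section Degree
variable [Fintype V] [DecidableEq V]
set_option linter.unusedSectionVars false

lemma F_diag_zero {F : Sym2 V → ℕ} (hsupp : ∀ e, F e ≠ 0 → ¬ e.IsDiag) (v : V) :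
    F s(v, v) = 0 := by
  by_contra h
  exact hsupp _ h (Sym2.mk_isDiag_iff.mpr rfl)

lemma mdeg_eq_degree {F : Sym2 V → ℕ} (hsupp : ∀ e, F e ≠ 0 → ¬ e.IsDiag)
    (hle : ∀ e, F e ≤ 1) (v : V) : mDeg F v = (fromMultiset F).degree v := by
  rw [SimpleGraph.degree, SimpleGraph.neighborFinset_eq_filter, Finset.card_filter]
  unfold mDeg
  refine Finset.sum_congr rfl fun z _ => ?_
  by_cases h : (fromMultiset F).Adj v z
  · rw [if_pos h]
    have h2 := h.2
    have := hle s(v, z)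
    omega
  · rw [if_neg h]
    rcases eq_or_ne v z with rfl | hvz
    · exact F_diag_zero hsupp v
    · by_contra hF
      exact h ⟨hvz, hF⟩

lemma treeDeg_eq_degree (J : SimpleGraph V) (v : V) : treeDeg J v = J.degree v := by
  rw [treeDeg, Nat.card_eq_fintype_card, Fintype.card_subtype,
    SimpleGraph.degree, SimpleGraph.neighborFinset_eq_filter]

lemma terminal_tree {F : Sym2 V → ℕ} (c : Sym2 V → ℝ)
    (hsupp : ∀ e, F e ≠ 0 → ¬ e.IsDiag) (hconn : (fromMultiset F).Connected)
    (hle : ∀ e, F e ≤ 1) (hac : (fromMultiset F).IsAcyclic) :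
    (fromMultiset F).IsTree ∧ (∀ v, treeDeg (fromMultiset F) v = mDeg F v) ∧
      tCost c (fromMultiset F) = mCost c F := by
  refine ⟨⟨hconn, hac⟩, fun v => ?_, ?_⟩
  · rw [treeDeg_eq_degree, mdeg_eq_degree hsupp hle]
  · unfold tCost mCost
    congr 1
    refine Finset.sum_congr rfl fun a _ => Finset.sum_congr rfl fun b _ => ?_
    by_cases h : (fromMultiset F).Adj a b
    · rw [if_pos h]
      have h2 := h.2
      have := hle s(a, b)
      have hF1 : F s(a, b) = 1 := by omega
      rw [hF1]
      push_cast
      ring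
    · rw [if_neg h]
      have hF0 : F s(a, b) = 0 := by
        rcases eq_or_ne a b with rfl | hab
        · exact F_diag_zero hsupp a
        · by_contra hF
          exact h ⟨hab, hF⟩
      rw [hF0]
      push_cast
      ring

end Degree

section Cycle
variable [Fintype V] [DecidableEq V]
set_option linter.unusedSectionVars false

open SimpleGraph

lemma cycle_ears {S : SimpleGraph V} {v0 : V} {c0 : S.Walk v0 v0} (hc : c0.IsCycle)
    {w : V} (hw : w ∈ c0.support) :
    ∃ u x, u ≠ x ∧ S.Adj w u ∧ S.Adj w x ∧ u ∈ c0.support ∧ x ∈ c0.support ∧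
      ∃ p : S.Walk x u, w ∉ p.support := by
  obtain ⟨c1, hc1, hmem⟩ : ∃ c1 : S.Walk w w, c1.IsCycle ∧
      ∀ a, a ∈ c1.support.tail → a ∈ c0.support := by
    refine ⟨c0.rotate w hw, hc.rotate hw, fun a ha => ?_⟩
    have hrot := SimpleGraph.Walk.support_rotate c0 w hw
    exact List.mem_of_mem_tail (hrot.mem_iff.mp ha)
  cases c1 with
  | nil => simpa using hc1.three_le_length
  | cons h p =>
    rename_i u
    -- h : S.Adj w u, p : S.Walk u w
    have hmem' : ∀ a, a ∈ p.support → a ∈ c0.support := by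
      intro a ha
      exact hmem a (by rwa [SimpleGraph.Walk.support_cons, List.tail_cons])
    have hnodup : p.support.Nodup := by
      have := hc1.support_nodup
      rwa [SimpleGraph.Walk.support_cons, List.tail_cons] at this
    have hlen : 2 ≤ p.length := by
      have := hc1.three_le_length
      rw [SimpleGraph.Walk.length_cons] at this
      omega
    obtain ⟨x, hwx, p₂, hrev⟩ := SimpleGraph.Walk.exists_eq_cons_of_ne h.ne p.reverse
    have hsupp_eq : w :: p₂.support = p.support.reverse := by
      rw [← SimpleGraph.Walk.support_reverse, hrev, SimpleGraph.Walk.support_cons]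
    have hcons_nodup : (w :: p₂.support).Nodup := by
      rw [hsupp_eq]
      exact List.nodup_reverse.mpr hnodup
    have hwnot : w ∉ p₂.support := (List.nodup_cons.mp hcons_nodup).1
    have hp2nodup : p₂.support.Nodup := (List.nodup_cons.mp hcons_nodup).2
    have hux : u ≠ x := by
      intro hux
      subst hux
      cases p₂ with
      | nil =>
        have := congrArg SimpleGraph.Walk.length hrev
        rw [SimpleGraph.Walk.length_reverse, SimpleGraph.Walk.length_cons,
          SimpleGraph.Walk.length_nil] at this
        omega
      | cons h₃ p₃ =>
        rename_i z
        have hend : u ∈ p₃.support := SimpleGraph.Walk.end_mem_support p₃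
        have : u ∉ p₃.support := by
          have := hp2nodup
          rw [SimpleGraph.Walk.support_cons] at this
          exact (List.nodup_cons.mp this).1
        exact this hend
    have hu_mem : u ∈ c0.support := hmem' u p.start_mem_support
    have hx_mem : x ∈ c0.support := by
      apply hmem' x
      have : x ∈ p.support.reverse := by
        rw [← hsupp_eq]
        exact List.mem_cons_of_mem _ p₂.start_mem_support
      exact List.mem_reverse.mp this
    exact ⟨u, x, hux, h, hwx, hu_mem, hx_mem, p₂, hwnot⟩

end Cycle

section Progress
variable [Fintype V] [DecidableEq V]
set_option linter.unusedSectionVars false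

open SimpleGraph

lemma move_conn {F : Sym2 V → ℕ} {w x y : V} (hconn : (fromMultiset F).Connected)
    (hxy : x ≠ y) (hwx : w ≠ x) (hwy : w ≠ y)
    (hWX : (fromMultiset (moveF F w x y)).Reachable w x) :
    (fromMultiset (moveF F w x y)).Connected := by
  apply conn_of hconn
  intro a b hab
  have hXY : (fromMultiset (moveF F w x y)).Adj x y :=
    ⟨hxy, by rw [moveF_xy hxy hwx hwy]; omega⟩
  have hWY : (fromMultiset (moveF F w x y)).Reachable w y := hWX.trans hXY.reachable
  rcases eq_or_ne s(a, b) s(w, x) with h | hA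
  · rw [Sym2.eq_iff] at h
    rcases h with ⟨rfl, rfl⟩ | ⟨rfl, rfl⟩
    · exact hWX
    · exact hWX.symm
  rcases eq_or_ne s(a, b) s(w, y) with h | hB
  · rw [Sym2.eq_iff] at h
    rcases h with ⟨rfl, rfl⟩ | ⟨rfl, rfl⟩
    · exact hWY
    · exact hWY.symm
  · have h1 := moveF_untouched (F := F) s(a, b) hA hB
    have h2 := hab.2
    exact SimpleGraph.Adj.reachable ⟨hab.1, by omega⟩

lemma progress (c : Sym2 V → ℝ) (hc0 : ∀ e, 0 ≤ c e)
    (htri : ∀ u v w : V, c s(u, v) ≤ c s(u, w) + c s(w, v))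
    (T : Finset V) (hTne : T.Nonempty)
    (F : Sym2 V → ℕ) (hsupp : ∀ e, F e ≠ 0 → ¬ e.IsDiag)
    (hconn : (fromMultiset F).Connected)
    (hjoin : ∀ v, Odd (mDeg F v) ↔ v ∈ T)
    (hnt : ¬ ((∀ e, F e ≤ 1) ∧ (fromMultiset F).IsAcyclic)) :
    ∃ F' : Sym2 V → ℕ, (∀ e, F' e ≠ 0 → ¬ e.IsDiag) ∧ (fromMultiset F').Connected ∧
      (∀ v, Odd (mDeg F' v) ↔ Odd (mDeg F v)) ∧ mCost c F' ≤ mCost c F ∧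
      (∑ e : Sym2 V, F' e) < ∑ e : Sym2 V, F e := by
  by_cases hle : ∀ e, F e ≤ 1
  · -- all multiplicities one; there must be a cycle
    have hac : ¬ (fromMultiset F).IsAcyclic := fun h => hnt ⟨hle, h⟩
    unfold SimpleGraph.IsAcyclic at hac
    push_neg at hac
    obtain ⟨v0, cw, hcyc⟩ := hac
    by_cases hbig : ∃ w ∈ cw.support, 3 ≤ (fromMultiset F).degree w
    · obtain ⟨w, hwsup, hdegw⟩ := hbig
      obtain ⟨u, x, hux, hAu, hAx, humem, hxmem, p₂, hwnot⟩ := cycle_ears hcyc hwsup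
      have hnot_sub : ¬ (fromMultiset F).neighborFinset w ⊆ {u, x} := by
        intro hsub
        have hcard := Finset.card_le_card hsub
        rw [Finset.card_pair hux] at hcard
        have hdeg' : ((fromMultiset F).neighborFinset w).card = (fromMultiset F).degree w := rfl
        omega
      obtain ⟨y, hyN, hynot⟩ := Finset.not_subset.mp hnot_sub
      have hAy : (fromMultiset F).Adj w y := (SimpleGraph.mem_neighborFinset _ _ _).mp hyN
      have hyu : y ≠ u := fun h => hynot (by simp [h])
      have hyx : y ≠ x := fun h => hynot (by simp [h])
      have hxy : x ≠ y := hyx.symm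
      have hwx : w ≠ x := hAx.ne
      have hwy : w ≠ y := hAy.ne
      have h1 : F s(w, x) ≠ 0 := hAx.2
      have h2 : F s(w, y) ≠ 0 := hAy.2
      have hWU : (fromMultiset (moveF F w x y)).Adj w u := by
        refine ⟨hAu.ne, ?_⟩
        have hne1 : s(w, u) ≠ s(w, x) := sym2_ne1 hux
        have hne2 : s(w, u) ≠ s(w, y) := sym2_ne1 hyu.symm
        have := moveF_untouched (F := F) s(w, u) hne1 hne2
        have := hAu.2
        omega
      have hedges : ∀ e ∈ p₂.edges, e ∈ (fromMultiset (moveF F w x y)).edgeSet := by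
        intro e he
        revert he
        refine Sym2.ind (fun a b he => ?_) e
        have hS : (fromMultiset F).Adj a b :=
          (SimpleGraph.mem_edgeSet _).mp (SimpleGraph.Walk.edges_subset_edgeSet p₂ he)
        have hwa : w ≠ a := fun h => hwnot (h ▸ p₂.fst_mem_support_of_mem_edges he)
        have hwb : w ≠ b := fun h => hwnot (h ▸ p₂.snd_mem_support_of_mem_edges he)
        have hwnotin : w ∉ s(a, b) := by
          rw [Sym2.mem_iff]
          rintro (h | h)
          · exact hwa h
          · exact hwb h
        have hne1 : s(a, b) ≠ s(w, x) := fun h => hwnotin (by rw [h]; exact Sym2.mem_mk_left w x)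
        have hne2 : s(a, b) ≠ s(w, y) := fun h => hwnotin (by rw [h]; exact Sym2.mem_mk_left w y)
        rw [SimpleGraph.mem_edgeSet _]
        refine ⟨hS.ne, ?_⟩
        have := moveF_untouched (F := F) s(a, b) hne1 hne2
        have := hS.2
        omega
      have hUX : (fromMultiset (moveF F w x y)).Reachable x u := ⟨p₂.transfer _ hedges⟩
      have hWX : (fromMultiset (moveF F w x y)).Reachable w x :=
        hWU.reachable.trans hUX.symm
      exact ⟨moveF F w x y, moveF_supp hxy hsupp, move_conn hconn hxy hwx hwy hWX,
        moveF_parity hxy hwx hwy h1 h2, moveF_cost c hc0 htri hxy hwx hwy h1 h2,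
        moveF_total hxy hwx hwy h1 h2⟩
    · exfalso
      push_neg at hbig
      have hcl : ∀ a ∈ cw.support, ∀ b, (fromMultiset F).Adj a b → b ∈ cw.support := by
        intro a ha b hadj
        obtain ⟨u, x, hux, hAu, hAx, humem, hxmem, -, -⟩ := cycle_ears hcyc ha
        by_contra hb
        have hbu : b ≠ u := fun h => hb (h ▸ humem)
        have hbx : b ≠ x := fun h => hb (h ▸ hxmem)
        have hsub : ({b, u, x} : Finset V) ⊆ (fromMultiset F).neighborFinset a := by
          intro z hz
          simp only [Finset.mem_insert, Finset.mem_singleton] at hz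
          rcases hz with rfl | rfl | rfl
          · exact (SimpleGraph.mem_neighborFinset _ _ _).mpr hadj
          · exact (SimpleGraph.mem_neighborFinset _ _ _).mpr hAu
          · exact (SimpleGraph.mem_neighborFinset _ _ _).mpr hAx
        have hcard := Finset.card_le_card hsub
        rw [Finset.card_insert_of_notMem (by simp [hbu, hbx]), Finset.card_pair hux] at hcard
        have := hbig a ha
        have hdeg' : ((fromMultiset F).neighborFinset a).card = (fromMultiset F).degree a := rfl
        omega
      have hall : ∀ b, b ∈ cw.support := by
        have key : ∀ (a b' : V) (q : (fromMultiset F).Walk a b'),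
            a ∈ cw.support → b' ∈ cw.support := by
          intro a b' q
          induction q with
          | nil => exact id
          | cons had q ih => exact fun ha => ih (hcl _ ha _ had)
        intro b
        obtain ⟨pw⟩ := hconn.preconnected v0 b
        exact key v0 b pw cw.start_mem_support
      obtain ⟨t, ht⟩ := hTne
      have hodd : Odd (mDeg F t) := (hjoin t).mpr ht
      rw [mdeg_eq_degree hsupp hle] at hodd
      obtain ⟨u, x, hux, hAu, hAx, -, -, -, -⟩ := cycle_ears hcyc (hall t)
      have hsub : ({u, x} : Finset V) ⊆ (fromMultiset F).neighborFinset t := by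
        intro z hz
        simp only [Finset.mem_insert, Finset.mem_singleton] at hz
        rcases hz with rfl | rfl
        · exact (SimpleGraph.mem_neighborFinset _ _ _).mpr hAu
        · exact (SimpleGraph.mem_neighborFinset _ _ _).mpr hAx
      have hcard := Finset.card_le_card hsub
      rw [Finset.card_pair hux] at hcard
      have hle2 := hbig t (hall t)
      have hdeg' : ((fromMultiset F).neighborFinset t).card = (fromMultiset F).degree t := rfl
      rw [Nat.odd_iff] at hodd
      omega
  · -- some edge with multiplicity at least two
    push_neg at hle
    obtain ⟨e₀, he₀⟩ := hle
    have he₀' : 2 ≤ F e₀ := he₀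
    clear he₀
    revert he₀'
    refine Sym2.ind (fun u w he₀ => ?_) e₀
    have huw : u ≠ w := by
      have := hsupp s(u, w) (by omega)
      rwa [Sym2.mk_isDiag_iff] at this
    by_cases h3 : 3 ≤ F s(u, w)
    · exact ⟨dropTwo F s(u, w), dropTwo_supp hsupp _,
        by rw [dropTwo_graph h3]; exact hconn,
        dropTwo_parity huw (by omega), dropTwo_cost c hc0 _, dropTwo_total (by omega)⟩
    have h2 : F s(u, w) = 2 := by omega
    by_cases hout : ∃ z, z ≠ u ∧ z ≠ w ∧
        ((fromMultiset F).Adj u z ∨ (fromMultiset F).Adj w z)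
    · obtain ⟨z, hzu, hzw, hadj⟩ := hout
      rcases hadj with hadj | hadj
      · -- middle u, removes s(u,w) and s(u,z), adds s(w,z)
        have hxy : w ≠ z := hzw.symm
        have hwx : u ≠ w := huw
        have hwy : u ≠ z := hzu.symm
        have h1 : F s(u, w) ≠ 0 := by omega
        have hz2 : F s(u, z) ≠ 0 := hadj.2
        have hWX : (fromMultiset (moveF F u w z)).Reachable u w := by
          refine SimpleGraph.Adj.reachable ⟨huw, ?_⟩
          rw [moveF_wx]
          omega
        exact ⟨moveF F u w z, moveF_supp hxy hsupp, move_conn hconn hxy hwx hwy hWX,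
          moveF_parity hxy hwx hwy h1 hz2, moveF_cost c hc0 htri hxy hwx hwy h1 hz2,
          moveF_total hxy hwx hwy h1 hz2⟩
      · -- middle w, removes s(w,u) and s(w,z), adds s(u,z)
        have hswu : s(w, u) = s(u, w) := Sym2.eq_swap
        have hxy : u ≠ z := hzu.symm
        have hwx : w ≠ u := huw.symm
        have hwy : w ≠ z := hzw.symm
        have h1 : F s(w, u) ≠ 0 := by rw [hswu]; omega
        have hz2 : F s(w, z) ≠ 0 := hadj.2
        have hWX : (fromMultiset (moveF F w u z)).Reachable w u := by
          refine SimpleGraph.Adj.reachable ⟨hwx, ?_⟩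
          rw [moveF_wx, hswu]
          omega
        exact ⟨moveF F w u z, moveF_supp hxy hsupp, move_conn hconn hxy hwx hwy hWX,
          moveF_parity hxy hwx hwy h1 hz2, moveF_cost c hc0 htri hxy hwx hwy h1 hz2,
          moveF_total hxy hwx hwy h1 hz2⟩
    · exfalso
      push_neg at hout
      have hcl : ∀ a b, (fromMultiset F).Adj a b → (a = u ∨ a = w) → (b = u ∨ b = w) := by
        intro a b hadj ha
        by_contra hb
        push_neg at hb
        have h := hout b hb.1 hb.2
        rcases ha with rfl | rfl
        · exact h.1 hadj
        · exact h.2 hadj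
      have huniv : ∀ b, b = u ∨ b = w := by
        have key : ∀ (a b' : V) (q : (fromMultiset F).Walk a b'),
            (a = u ∨ a = w) → (b' = u ∨ b' = w) := by
          intro a b' q
          induction q with
          | nil => exact id
          | cons had q ih => exact fun ha => ih (hcl _ _ had ha)
        intro b
        obtain ⟨pw⟩ := hconn.preconnected u b
        exact key u b pw (Or.inl rfl)
      have hpair : ({u, w} : Finset V) = Finset.univ := by
        apply Finset.eq_univ_iff_forall.mpr
        intro b
        rcases huniv b with rfl | rfl <;> simp
      obtain ⟨t, ht⟩ := hTne
      have hodd : Odd (mDeg F t) := (hjoin t).mpr ht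
      have hdu : mDeg F u = 2 := by
        unfold mDeg
        rw [← hpair, Finset.sum_pair huw, F_diag_zero hsupp u, h2]
      have hdw : mDeg F w = 2 := by
        unfold mDeg
        rw [← hpair, Finset.sum_pair huw, F_diag_zero hsupp w]
        rw [show s(w, u) = s(u, w) from Sym2.eq_swap, h2]
      rcases huniv t with rfl | rfl
      · rw [hdu] at hodd; simp [Nat.odd_iff] at hodd
      · rw [hdw] at hodd; simp [Nat.odd_iff] at hodd

end Progress

section Main
variable [Fintype V] [DecidableEq V]
set_option linter.unusedSectionVars false

lemma build (c : Sym2 V → ℝ) (hc0 : ∀ e, 0 ≤ c e)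
    (htri : ∀ u v w : V, c s(u, v) ≤ c s(u, w) + c s(w, v))
    (T : Finset V) (hTne : T.Nonempty) :
    ∀ n (F : Sym2 V → ℕ), (∑ e : Sym2 V, F e) ≤ n →
      (∀ e, F e ≠ 0 → ¬ e.IsDiag) → (fromMultiset F).Connected →
      (∀ v, Odd (mDeg F v) ↔ v ∈ T) →
      ∃ J : SimpleGraph V, J.IsTree ∧ (∀ v, Odd (treeDeg J v) ↔ v ∈ T) ∧
        tCost c J ≤ mCost c F := by
  intro n
  induction n with
  | zero =>
    intro F hn hsupp hconn hjoin
    exfalso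
    obtain ⟨t, ht⟩ := hTne
    have hodd : Odd (mDeg F t) := (hjoin t).mpr ht
    have hF0 : ∀ e, F e = 0 := by
      intro e
      have := Finset.single_le_sum (f := F) (fun e _ => Nat.zero_le _) (Finset.mem_univ e)
      omega
    have : mDeg F t = 0 := by
      unfold mDeg
      exact Finset.sum_eq_zero fun z _ => hF0 _
    rw [this] at hodd
    simp [Nat.odd_iff] at hodd
  | succ n ih =>
    intro F hn hsupp hconn hjoin
    by_cases hterm : (∀ e, F e ≤ 1) ∧ (fromMultiset F).IsAcyclic
    · obtain ⟨htree, hdeg, hcost⟩ := terminal_tree c hsupp hconn hterm.1 hterm.2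
      exact ⟨fromMultiset F, htree, fun v => by rw [hdeg v]; exact hjoin v, le_of_eq hcost⟩
    · obtain ⟨F', hsupp', hconn', hpar', hcost', hlt'⟩ :=
        progress c hc0 htri T hTne F hsupp hconn hjoin hterm
      obtain ⟨J, hJ1, hJ2, hJ3⟩ := ih F' (by omega) hsupp' hconn'
        (fun v => (hpar' v).trans (hjoin v))
      exact ⟨J, hJ1, hJ2, hJ3.trans hcost'⟩

end Main

theorem stmt2 {V : Type*} [Fintype V] [DecidableEq V]
    (hV : 2 ≤ Fintype.card V)
    (c : Sym2 V → ℝ) (hc0 : ∀ e, 0 ≤ c e)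
    (htri : ∀ u v w : V, c s(u, v) ≤ c s(u, w) + c s(w, v))
    (T : Finset V) (hTne : T.Nonempty) (hTeven : Even T.card)
    (F : Sym2 V → ℕ) (hsupp : ∀ e, F e ≠ 0 → ¬ e.IsDiag)
    (hconn : (fromMultiset F).Connected)
    (hjoin : ∀ v, Odd (mDeg F v) ↔ v ∈ T) :
    ∃ J : SimpleGraph V, J.IsTree ∧ (∀ v, Odd (treeDeg J v) ↔ v ∈ T) ∧
      tCost c J ≤ mCost c F := by
  exact build c hc0 htri T hTne (∑ e : Sym2 V, F e) F le_rfl hsupp hconn hjoin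
end

section
/- Let G=(V,E) be a connected undirected graph and T ⊆ V of even cardinality. Let x* : E → ℝ satisfy: x* ≥ 0; x*(δ(S)) ≥ 1 for every T-odd S ⊊ V; and x*(δ(S)) ≥ 2 for every T-even set S with ∅ ⊊ S ⊊ V. Let J be a spanning tree of G and let D be the set of wrong-degree nodes of J with respect to T (nodes of T with even degree in J and nodes of V∖T with odd degree in J). Then the vector y = (1/3)·χ(J) + (1/3)·x* is a fractional D-join, i.e., y(δ(U)) ≥ 1 for every D-odd set U ⊆ V. -/
open Finset
open scoped Classical

variable {V : Type*}

/-- `x(δ(U))`: the total `x`-value of the edges of `G` with exactly one endpoint in `U`. -/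
noncomputable def xCut [Fintype V] [DecidableEq V] (G : SimpleGraph V)
    (x : Sym2 V → ℝ) (U : Finset V) : ℝ :=
  ∑ u ∈ U, ∑ w ∈ Uᶜ, if G.Adj u w then x s(u, w) else 0

/-- The double sum of a symmetric irreflexive indicator over `U × U` is even. -/
lemma even_inner_sum [DecidableEq V] (J : SimpleGraph V) (U : Finset V) :
    Even (∑ u ∈ U, ∑ w ∈ U, if J.Adj u w then 1 else 0) := by
  classical
  induction U using Finset.induction_on with
  | empty => simp
  | @insert a s ha ih =>
    rw [Finset.sum_insert ha]
    have h1 : ∀ u ∈ s, (∑ w ∈ insert a s, if J.Adj u w then 1 else 0)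
        = (if J.Adj u a then 1 else 0) + ∑ w ∈ s, if J.Adj u w then 1 else 0 := by
      intro u _
      rw [Finset.sum_insert ha]
    rw [Finset.sum_congr rfl h1, Finset.sum_add_distrib, Finset.sum_insert ha]
    have h2 : (if J.Adj a a then 1 else 0) = 0 := by simp
    have h3 : (∑ u ∈ s, if J.Adj u a then 1 else 0)
        = ∑ w ∈ s, if J.Adj a w then 1 else 0 :=
      Finset.sum_congr rfl fun u _ => by rw [SimpleGraph.adj_comm]
    rw [h2, h3]
    obtain ⟨r, hr⟩ := ih
    exact ⟨(∑ w ∈ s, if J.Adj a w then 1 else 0) + r, by omega⟩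

/-- A walk from inside `U` to outside `U` crosses the cut. -/
lemma exists_cross [DecidableEq V] (J : SimpleGraph V) (U : Finset V) {a b : V}
    (p : J.Walk a b) (ha : a ∈ U) (hb : b ∉ U) :
    ∃ u ∈ U, ∃ w, w ∉ U ∧ J.Adj u w := by
  induction p with
  | nil => exact absurd ha hb
  | @cons u v w h p ih =>
    by_cases hv : v ∈ U
    · exact ih hv hb
    · exact ⟨u, ha, v, hv, h⟩

theorem stmt5 {V : Type*} [Fintype V] [DecidableEq V]
    (G : SimpleGraph V) (hG : G.Connected)
    (T : Finset V) (hTeven : Even T.card)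
    (x : Sym2 V → ℝ) (hx0 : ∀ e ∈ G.edgeSet, 0 ≤ x e)
    (hodd : ∀ S : Finset V, S ≠ univ → Odd ((S ∩ T).card) → 1 ≤ xCut G x S)
    (heven : ∀ S : Finset V, S.Nonempty → S ≠ univ → Even ((S ∩ T).card) →
      2 ≤ xCut G x S)
    (J : SimpleGraph V) (hJG : J ≤ G) (hJtree : J.IsTree)
    (D : Finset V)
    (hD : ∀ v, v ∈ D ↔ ((v ∈ T ∧ Even (treeDeg J v)) ∨ (v ∉ T ∧ Odd (treeDeg J v)))) :
    let y : Sym2 V → ℝ :=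
      fun e => (1 / 3) * (if e ∈ J.edgeSet then 1 else 0) + (1 / 3) * x e
    (∀ e ∈ G.edgeSet, 0 ≤ y e) ∧
    (∀ U : Finset V, Odd ((U ∩ D).card) → 1 ≤ xCut G y U) := by
  intro y
  constructor
  · intro e he
    have hx := hx0 e he
    have h1 : (0:ℝ) ≤ if e ∈ J.edgeSet then (1:ℝ) else 0 := by
      split <;> norm_num
    have : y e = (1/3) * (if e ∈ J.edgeSet then (1:ℝ) else 0) + (1/3) * x e := rfl
    rw [this]
    nlinarith
  · intro U hUD
    -- the number of tree edges crossing the cut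
    set c : ℕ := ∑ u ∈ U, ∑ w ∈ Uᶜ, if J.Adj u w then 1 else 0 with hc
    -- key identity relating xCut of y to c and xCut of x
    have hyx : xCut G y U = 1/3 * (c:ℝ) + 1/3 * xCut G x U := by
      have hcast : (c : ℝ) = ∑ u ∈ U, ∑ w ∈ Uᶜ, if J.Adj u w then (1:ℝ) else 0 := by
        rw [hc]; push_cast; rfl
      simp only [xCut, hcast, Finset.mul_sum, ← Finset.sum_add_distrib]
      refine Finset.sum_congr rfl fun u _ => Finset.sum_congr rfl fun w _ => ?_
      by_cases h : G.Adj u w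
      · have hJe : (s(u, w) ∈ J.edgeSet) = J.Adj u w := by
          simp [SimpleGraph.mem_edgeSet]
        simp only [y, h, if_true, hJe]
      · have hj : ¬ J.Adj u w := fun hj => h (hJG hj)
        simp [h, hj]
    -- degrees as indicator sums
    have hdeg : ∀ v, treeDeg J v = ∑ w : V, if J.Adj v w then 1 else 0 := by
      intro v
      rw [treeDeg, Nat.card_eq_fintype_card, Fintype.card_subtype, Finset.card_filter]
    -- parity identity: c ≡ |U ∩ T| + |U ∩ D| (mod 2)
    have hparity : (c : ZMod 2) = ((U ∩ T).card : ZMod 2) + ((U ∩ D).card : ZMod 2) := by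
      have hsplit : ∑ v ∈ U, treeDeg J v
          = (∑ u ∈ U, ∑ w ∈ U, if J.Adj u w then 1 else 0) + c := by
        rw [hc, ← Finset.sum_add_distrib]
        refine Finset.sum_congr rfl fun v _ => ?_
        rw [hdeg v, Finset.sum_add_sum_compl U (fun w => if J.Adj v w then 1 else 0)]
      have hinner := even_inner_sum J U
      have h1 : ((∑ v ∈ U, treeDeg J v : ℕ) : ZMod 2) = (c : ZMod 2) := by
        rw [hsplit, Nat.cast_add, (ZMod.natCast_eq_zero_iff_even).mpr hinner, zero_add]
      have h2 : ((∑ v ∈ U, treeDeg J v : ℕ) : ZMod 2)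
          = ∑ v ∈ U, ((if v ∈ T then (1 : ZMod 2) else 0) + (if v ∈ D then 1 else 0)) := by
        push_cast
        refine Finset.sum_congr rfl fun v _ => ?_
        by_cases ht : v ∈ T <;> by_cases hd : v ∈ D
        · rcases (hD v).mp hd with ⟨_, he⟩ | ⟨hnt, _⟩
          · rw [ZMod.natCast_eq_zero_iff_even.mpr he]; simp [ht, hd]; decide
          · exact absurd ht hnt
        · have hodd' : Odd (treeDeg J v) := by
            by_contra hcon
            exact hd ((hD v).mpr (Or.inl ⟨ht, Nat.not_odd_iff_even.mp hcon⟩))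
          rw [ZMod.natCast_eq_one_iff_odd.mpr hodd']; simp [ht, hd]
        · rcases (hD v).mp hd with ⟨hnt, _⟩ | ⟨_, ho⟩
          · exact absurd hnt ht
          · rw [ZMod.natCast_eq_one_iff_odd.mpr ho]; simp [ht, hd]
        · have heven' : Even (treeDeg J v) := by
            by_contra hcon
            exact hd ((hD v).mpr (Or.inr ⟨ht, Nat.not_even_iff_odd.mp hcon⟩))
          rw [ZMod.natCast_eq_zero_iff_even.mpr heven']; simp [ht, hd]
      have h3 : ∑ v ∈ U, ((if v ∈ T then (1 : ZMod 2) else 0) + (if v ∈ D then 1 else 0))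
          = ((U ∩ T).card : ZMod 2) + ((U ∩ D).card : ZMod 2) := by
        rw [Finset.sum_add_distrib, Finset.sum_boole, Finset.sum_boole,
          Finset.filter_mem_eq_inter, Finset.filter_mem_eq_inter]
      rw [← h1, h2, h3]
    -- U is a proper nonempty subset
    have hUne : U ≠ univ := by
      intro h
      subst h
      have hc0 : c = 0 := by
        rw [hc]
        simp
      have hT0 : ((univ ∩ T).card : ZMod 2) = 0 := by
        rw [Finset.univ_inter]
        exact ZMod.natCast_eq_zero_iff_even.mpr hTeven
      rw [hc0, hT0] at hparity
      have : ((univ ∩ D).card : ZMod 2) = 0 := by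
        simpa using hparity.symm
      rw [ZMod.natCast_eq_zero_iff_even] at this
      exact (Nat.not_odd_iff_even.mpr this) hUD
    have hUnonempty : U.Nonempty := by
      obtain ⟨v, hv⟩ := Finset.card_pos.mp hUD.pos
      exact ⟨v, (Finset.mem_inter.mp hv).1⟩
    -- the tree cut is nonempty
    have hcross : 1 ≤ c := by
      obtain ⟨a, ha⟩ := hUnonempty
      obtain ⟨b, hb⟩ : ∃ b, b ∉ U := by
        by_contra hcon
        push_neg at hcon
        exact hUne (Finset.eq_univ_iff_forall.mpr hcon)
      obtain ⟨u, hu, w, hw, hadj⟩ :=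
        exists_cross J U ((hJtree.isConnected.preconnected a b).some) ha hb
      have h1 : (1:ℕ) ≤ ∑ w' ∈ Uᶜ, if J.Adj u w' then 1 else 0 := by
        calc (1:ℕ) = if J.Adj u w then 1 else 0 := by simp [hadj]
          _ ≤ _ := Finset.single_le_sum (f := fun w' => if J.Adj u w' then (1:ℕ) else 0)
              (fun i _ => by positivity) (Finset.mem_compl.mpr hw)
      calc (1:ℕ) ≤ ∑ w' ∈ Uᶜ, if J.Adj u w' then 1 else 0 := h1
        _ ≤ c := Finset.single_le_sum (f := fun u => ∑ w' ∈ Uᶜ, if J.Adj u w' then 1 else 0)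
            (fun i _ => by positivity) hu
    rw [hyx]
    by_cases hT : Odd ((U ∩ T).card)
    · have hcx := hodd U hUne hT
      have hceven : Even c := by
        rw [← ZMod.natCast_eq_zero_iff_even, hparity, ZMod.natCast_eq_one_iff_odd.mpr hT,
          ZMod.natCast_eq_one_iff_odd.mpr hUD]
        decide
      obtain ⟨r, hr⟩ := hceven
      have hc2 : 2 ≤ c := by omega
      have hc2' : (2:ℝ) ≤ (c : ℝ) := by exact_mod_cast hc2
      linarith
    · have hcx := heven U hUnonempty hUne (Nat.not_odd_iff_even.mp hT)
      have hc1 : (1:ℝ) ≤ (c : ℝ) := by exact_mod_cast hcross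
      linarith
end

section
/- Let G=(V,E) be a graph and T ⊆ V of even cardinality. Let x* : E → ℝ satisfy x* ≥ 0 and x*(δ(S)) ≥ 2 for every T-even set S with ∅ ⊊ S ⊊ V. Let 0 ≤ τ ≤ 1 and let R, S ⊆ V be two distinct T-odd sets that are τ-narrow, i.e., x*(δ(R)) < 1+τ and x*(δ(S)) < 1+τ. Then R and S do not cross: it is not the case that R∩S, R∪S, R∖S and S∖R are all nonempty proper subsets of V. -/
open Finset
open scoped Classical
variable {V : Type*}

lemma xCut_eq [Fintype V] [DecidableEq V] (G : SimpleGraph V)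
    (x : Sym2 V → ℝ) (U : Finset V) :
    xCut G x U = ∑ u : V, ∑ w : V,
      if u ∈ U ∧ w ∉ U then (if G.Adj u w then x s(u, w) else 0) else 0 := by
  unfold xCut
  have h1 : ∀ u : V, (∑ w : V, if u ∈ U ∧ w ∉ U then (if G.Adj u w then x s(u, w) else 0) else 0)
      = if u ∈ U then ∑ w ∈ Uᶜ, (if G.Adj u w then x s(u, w) else 0) else 0 := by
    intro u; by_cases hu : u ∈ U
    · simp only [hu, true_and, if_true]
      rw [← Finset.sum_filter]
      congr 1
      ext w; simp
    · simp [hu]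
  simp_rw [h1]
  rw [Finset.sum_ite_mem, Finset.univ_inter]

lemma two_xCut [Fintype V] [DecidableEq V] (G : SimpleGraph V)
    (x : Sym2 V → ℝ) (U : Finset V) :
    2 * xCut G x U = ∑ u : V, ∑ w : V,
      if (u ∈ U ↔ w ∈ U) then 0 else (if G.Adj u w then x s(u, w) else 0) := by
  have symmf : ∀ u w : V, (if G.Adj u w then x s(u, w) else 0)
      = (if G.Adj w u then x s(w, u) else 0) := by
    intro u w
    rw [SimpleGraph.adj_comm, Sym2.eq_swap]
  have key : (∑ u : V, ∑ w : V,
      if (u ∈ U ↔ w ∈ U) then 0 else (if G.Adj u w then x s(u, w) else 0))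
      = (∑ u : V, ∑ w : V, ((if u ∈ U ∧ w ∉ U then (if G.Adj u w then x s(u, w) else 0) else 0)
        + (if w ∈ U ∧ u ∉ U then (if G.Adj u w then x s(u, w) else 0) else 0))) := by
    apply Finset.sum_congr rfl; intro u _
    apply Finset.sum_congr rfl; intro w _
    by_cases h1 : u ∈ U <;> by_cases h2 : w ∈ U <;> simp [h1, h2]
  rw [key]
  simp_rw [Finset.sum_add_distrib]
  rw [xCut_eq, two_mul]
  congr 1
  rw [Finset.sum_comm]
  apply Finset.sum_congr rfl; intro u _
  apply Finset.sum_congr rfl; intro w _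
  rw [symmf]

lemma submod1 [Fintype V] [DecidableEq V] (G : SimpleGraph V)
    (x : Sym2 V → ℝ) (hx0 : ∀ e ∈ G.edgeSet, 0 ≤ x e) (R S : Finset V) :
    xCut G x (R ∩ S) + xCut G x (R ∪ S) ≤ xCut G x R + xCut G x S := by
  have h2 : 2 * xCut G x (R ∩ S) + 2 * xCut G x (R ∪ S)
      ≤ 2 * xCut G x R + 2 * xCut G x S := by
    simp only [two_xCut]
    rw [← Finset.sum_add_distrib, ← Finset.sum_add_distrib]
    apply Finset.sum_le_sum; intro u _
    rw [← Finset.sum_add_distrib, ← Finset.sum_add_distrib]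
    apply Finset.sum_le_sum; intro w _
    have hf : 0 ≤ (if G.Adj u w then x s(u, w) else 0) := by
      split
      · exact hx0 _ ((G.mem_edgeSet).mpr (by assumption))
      · exact le_refl _
    by_cases h1 : u ∈ R <;> by_cases h2 : u ∈ S <;> by_cases h3 : w ∈ R <;>
      by_cases h4 : w ∈ S <;>
      simp [h1, h2, h3, h4, Finset.mem_inter, Finset.mem_union] <;> linarith
  linarith

lemma submod2 [Fintype V] [DecidableEq V] (G : SimpleGraph V)
    (x : Sym2 V → ℝ) (hx0 : ∀ e ∈ G.edgeSet, 0 ≤ x e) (R S : Finset V) :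
    xCut G x (R \ S) + xCut G x (S \ R) ≤ xCut G x R + xCut G x S := by
  have h2 : 2 * xCut G x (R \ S) + 2 * xCut G x (S \ R)
      ≤ 2 * xCut G x R + 2 * xCut G x S := by
    simp only [two_xCut]
    rw [← Finset.sum_add_distrib, ← Finset.sum_add_distrib]
    apply Finset.sum_le_sum; intro u _
    rw [← Finset.sum_add_distrib, ← Finset.sum_add_distrib]
    apply Finset.sum_le_sum; intro w _
    have hf : 0 ≤ (if G.Adj u w then x s(u, w) else 0) := by
      split
      · exact hx0 _ ((G.mem_edgeSet).mpr (by assumption))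
      · exact le_refl _
    by_cases h1 : u ∈ R <;> by_cases h2 : u ∈ S <;> by_cases h3 : w ∈ R <;>
      by_cases h4 : w ∈ S <;>
      simp [h1, h2, h3, h4, Finset.mem_sdiff] <;> linarith
  linarith

theorem stmt8 {V : Type*} [Fintype V] [DecidableEq V]
    (G : SimpleGraph V)
    (T : Finset V) (hTeven : Even T.card)
    (x : Sym2 V → ℝ) (hx0 : ∀ e ∈ G.edgeSet, 0 ≤ x e)
    (heven : ∀ S : Finset V, S.Nonempty → S ≠ univ → Even ((S ∩ T).card) →
      2 ≤ xCut G x S)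
    (τ : ℝ) (hτ0 : 0 ≤ τ) (hτ1 : τ ≤ 1)
    (R S : Finset V) (hRS : R ≠ S)
    (hRodd : Odd ((R ∩ T).card)) (hSodd : Odd ((S ∩ T).card))
    (hRnarrow : xCut G x R < 1 + τ) (hSnarrow : xCut G x S < 1 + τ) :
    ¬ ((R ∩ S).Nonempty ∧ R ∩ S ≠ univ ∧ (R ∪ S).Nonempty ∧ R ∪ S ≠ univ ∧
       (R \ S).Nonempty ∧ R \ S ≠ univ ∧ (S \ R).Nonempty ∧ S \ R ≠ univ) := by
  rintro ⟨hne1, hnu1, hne2, hnu2, hne3, hnu3, hne4, hnu4⟩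
  have hIU : ((R ∩ S) ∩ T).card + ((R ∪ S) ∩ T).card = (R ∩ T).card + (S ∩ T).card := by
    rw [show (R ∩ S) ∩ T = (R ∩ T) ∩ (S ∩ T) by ext a; simp; try tauto,
        show (R ∪ S) ∩ T = (R ∩ T) ∪ (S ∩ T) by ext a; simp; try tauto]
    exact Finset.card_inter_add_card_union _ _
  have hRsplit : ((R \ S) ∩ T).card + ((R ∩ S) ∩ T).card = (R ∩ T).card := by
    have hu : ((R \ S) ∩ T) ∪ ((R ∩ S) ∩ T) = R ∩ T := by ext a; simp; try tauto
    have hd : Disjoint ((R \ S) ∩ T) ((R ∩ S) ∩ T) := by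
      rw [Finset.disjoint_left]; intro a ha hb; simp at ha hb; tauto
    rw [← hu, Finset.card_union_of_disjoint hd]
  have hSsplit : ((S \ R) ∩ T).card + ((R ∩ S) ∩ T).card = (S ∩ T).card := by
    have hu : ((S \ R) ∩ T) ∪ ((R ∩ S) ∩ T) = S ∩ T := by ext a; simp; try tauto
    have hd : Disjoint ((S \ R) ∩ T) ((R ∩ S) ∩ T) := by
      rw [Finset.disjoint_left]; intro a ha hb; simp at ha hb; tauto
    rw [← hu, Finset.card_union_of_disjoint hd]
  obtain ⟨a, ha⟩ := hRodd
  obtain ⟨b, hb⟩ := hSodd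
  by_cases hE : Even (((R ∩ S) ∩ T).card)
  · obtain ⟨c, hc⟩ := hE
    have hEU : Even (((R ∪ S) ∩ T).card) := by
      rcases Nat.even_or_odd (((R ∪ S) ∩ T).card) with h | ⟨d, hd⟩
      · exact h
      · omega
    have h1 := heven (R ∩ S) hne1 hnu1 ⟨c, hc⟩
    have h2 := heven (R ∪ S) hne2 hnu2 hEU
    have h3 := submod1 G x hx0 R S
    linarith
  · rw [Nat.not_even_iff_odd] at hE
    obtain ⟨c, hc⟩ := hE
    have hE1 : Even (((R \ S) ∩ T).card) := by
      rcases Nat.even_or_odd (((R \ S) ∩ T).card) with h | ⟨d, hd⟩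
      · exact h
      · omega
    have hE2 : Even (((S \ R) ∩ T).card) := by
      rcases Nat.even_or_odd (((S \ R) ∩ T).card) with h | ⟨d, hd⟩
      · exact h
      · omega
    have h1 := heven (R \ S) hne3 hnu3 hE1
    have h2 := heven (S \ R) hne4 hnu4 hE2
    have h3 := submod2 G x hx0 R S
    linarith
end

section
/- Let G=(V,E) be a graph, T ⊆ V of even cardinality, and t̂ ∈ T a fixed node. Let x* : E → ℝ satisfy x* ≥ 0 and the partition inequality x*(δ(P₁,…,P_k)) ≥ k−1 for every partition of V into nonempty sets P₁,…,P_k. Let 0 ≤ τ ≤ 1/2, let 𝓛 be the family of all T-odd τ-narrow subsets of V∖{t̂} (sets S ⊆ V∖{t̂} with |S∩T| odd and x*(δ(S)) < 1+τ), and let 𝓛′ ⊆ 𝓛 be any subfamily. For U ∈ 𝓛′ define g_{𝓛′}(U) = { v ∈ U : v ∉ W for every W ∈ 𝓛′ with W ⊊ U }. Then the family of sets { g_{𝓛′}(U) : U ∈ 𝓛′ } together with V ∖ ⋃_{W∈𝓛′} W forms a partition of V, and every set in this family is nonempty. -/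
open Finset
open scoped Classical

variable {V : Type*}

section Helpers
variable [Fintype V] [DecidableEq V] (G : SimpleGraph V) (x : Sym2 V → ℝ)

lemma xCut_eq_ind (U : Finset V) :
    xCut G x U = ∑ u : V, ∑ w : V,
      (if u ∈ U ∧ w ∉ U then (1:ℝ) else 0) * (if G.Adj u w then x s(u, w) else 0) := by
  unfold xCut
  rw [← Finset.sum_subset (Finset.subset_univ U)]
  · refine Finset.sum_congr rfl fun u hu => ?_
    rw [← Finset.sum_subset (Finset.subset_univ Uᶜ)]
    · refine Finset.sum_congr rfl fun w hw => ?_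
      simp [Finset.mem_compl.mp hw, hu]
    · intro w _ hw
      simp only [Finset.mem_compl, not_not] at hw
      simp [hw]
  · intro u _ hu
    simp [hu]

lemma xCut_eq_ind' (U : Finset V) :
    xCut G x U = ∑ u : V, ∑ w : V,
      (if w ∈ U ∧ u ∉ U then (1:ℝ) else 0) * (if G.Adj u w then x s(u, w) else 0) := by
  rw [xCut_eq_ind, Finset.sum_comm]
  refine Finset.sum_congr rfl fun u _ => Finset.sum_congr rfl fun w _ => ?_
  have hadj : G.Adj w u ↔ G.Adj u w := G.adj_comm w u
  have hs : s(w, u) = s(u, w) := Sym2.eq_swap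
  rw [hadj, hs]

variable (hx0 : ∀ e ∈ G.edgeSet, 0 ≤ x e)
include hx0

lemma f_nonneg (u w : V) : 0 ≤ (if G.Adj u w then x s(u, w) else 0) := by
  split
  · exact hx0 _ (by rwa [SimpleGraph.mem_edgeSet])
  · exact le_refl _

omit hx0 in
lemma xCut_compl (U : Finset V) : xCut G x Uᶜ = xCut G x U := by
  rw [xCut_eq_ind' G x Uᶜ, xCut_eq_ind]
  refine Finset.sum_congr rfl fun u _ => Finset.sum_congr rfl fun w _ => ?_
  congr 1
  simp only [Finset.mem_compl, not_not]
  by_cases h1 : u ∈ U <;> by_cases h2 : w ∈ U <;> simp [h1, h2]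

lemma xCut_submod_inter_union (A B : Finset V) :
    xCut G x (A ∩ B) + xCut G x (A ∪ B) ≤ xCut G x A + xCut G x B := by
  simp only [xCut_eq_ind, ← Finset.sum_add_distrib]
  refine Finset.sum_le_sum fun u _ => Finset.sum_le_sum fun w _ => ?_
  rw [← add_mul, ← add_mul]
  refine mul_le_mul_of_nonneg_right ?_ (f_nonneg G x hx0 u w)
  by_cases h1 : u ∈ A <;> by_cases h2 : u ∈ B <;> by_cases h3 : w ∈ A <;>
    by_cases h4 : w ∈ B <;>
    simp [Finset.mem_inter, Finset.mem_union, h1, h2, h3, h4]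

lemma xCut_submod_diff (A B : Finset V) :
    xCut G x (A \ B) + xCut G x (B \ A) ≤ xCut G x A + xCut G x B := by
  rw [xCut_eq_ind G x (A \ B), xCut_eq_ind' G x (B \ A),
    xCut_eq_ind G x A, xCut_eq_ind' G x B]
  simp only [← Finset.sum_add_distrib]
  refine Finset.sum_le_sum fun u _ => Finset.sum_le_sum fun w _ => ?_
  rw [← add_mul, ← add_mul]
  refine mul_le_mul_of_nonneg_right ?_ (f_nonneg G x hx0 u w)
  by_cases h1 : u ∈ A <;> by_cases h2 : u ∈ B <;> by_cases h3 : w ∈ A <;>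
    by_cases h4 : w ∈ B <;>
    simp [Finset.mem_sdiff, h1, h2, h3, h4]

end Helpers

lemma odd_sum_iff_odd_card {α : Type*} [DecidableEq α] (M : Finset α) (f : α → ℕ)
    (h : ∀ a ∈ M, Odd (f a)) : (Odd (∑ a ∈ M, f a) ↔ Odd M.card) := by
  induction M using Finset.induction_on with
  | empty => simp
  | @insert a s hx ih =>
    rw [Finset.sum_insert hx, Finset.card_insert_of_notMem hx]
    have ha : Odd (f a) := h a (Finset.mem_insert_self a s)
    have ihs := ih (fun b hb => h b (Finset.mem_insert_of_mem hb))
    simp only [Nat.odd_iff] at ha ihs ⊢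
    omega

theorem stmt9 {V : Type*} [Fintype V] [DecidableEq V]
    (G : SimpleGraph V)
    (T : Finset V) (hTeven : Even T.card)
    (that : V) (hthat : that ∈ T)
    (x : Sym2 V → ℝ) (hx0 : ∀ e ∈ G.edgeSet, 0 ≤ x e)
    -- the partition inequality, satisfied by fractional spanning trees
    (hpart : ∀ P : Finset (Finset V), (∀ p ∈ P, p.Nonempty) →
      (P : Set (Finset V)).PairwiseDisjoint id → P.biUnion id = univ →
      (P.card : ℝ) - 1 ≤ (∑ p ∈ P, xCut G x p) / 2)
    -- every nonempty proper T-even cut has x-value at least 2 (this makes the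
    -- family of T-odd τ-narrow cuts laminar)
    (heven : ∀ S : Finset V, S.Nonempty → S ≠ univ → Even ((S ∩ T).card) →
      2 ≤ xCut G x S)
    (τ : ℝ) (hτ0 : 0 ≤ τ) (hτ : τ ≤ 1 / 2)
    -- L' is a subfamily of the family of all T-odd τ-narrow subsets of V \ {t̂}
    (L' : Finset (Finset V))
    (hL' : ∀ S ∈ L', S ⊆ univ.erase that ∧ Odd ((S ∩ T).card) ∧ xCut G x S < 1 + τ) :
    (∀ U ∈ L', (U.filter (fun v => ∀ W ∈ L', W ⊂ U → v ∉ W)).Nonempty) ∧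
    (univ \ L'.biUnion id).Nonempty ∧
    (∀ U₁ ∈ L', ∀ U₂ ∈ L', U₁ ≠ U₂ →
      Disjoint (U₁.filter (fun v => ∀ W ∈ L', W ⊂ U₁ → v ∉ W))
        (U₂.filter (fun v => ∀ W ∈ L', W ⊂ U₂ → v ∉ W))) ∧
    (∀ U ∈ L', Disjoint (U.filter (fun v => ∀ W ∈ L', W ⊂ U → v ∉ W))
        (univ \ L'.biUnion id)) ∧
    ((univ \ L'.biUnion id) ∪
        L'.biUnion (fun U => U.filter (fun v => ∀ W ∈ L', W ⊂ U → v ∉ W)) = univ) := by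
  -- basic facts about members of L'
  have hthat_notin : ∀ W ∈ L', that ∉ W := by
    intro W hW h
    have := (hL' W hW).1 h
    simp at this
  have hne_univ : ∀ W ∈ L', W ≠ univ := by
    intro W hW h
    exact hthat_notin W hW (h ▸ Finset.mem_univ that)
  have hnonempty : ∀ W ∈ L', W.Nonempty := by
    intro W hW
    have hodd := (hL' W hW).2.1
    have : (W ∩ T).Nonempty := Finset.card_pos.mp hodd.pos
    exact this.mono Finset.inter_subset_left
  -- laminarity
  have laminar : ∀ A ∈ L', ∀ B ∈ L', A ⊆ B ∨ B ⊆ A ∨ Disjoint A B := by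
    intro A hA B hB
    by_contra hcon
    push_neg at hcon
    obtain ⟨hAB, hBA, hdisj⟩ := hcon
    obtain ⟨hA1, hA2, hA3⟩ := hL' A hA
    obtain ⟨hB1, hB2, hB3⟩ := hL' B hB
    have hABne : (A ∩ B).Nonempty := Finset.not_disjoint_iff_nonempty_inter.mp hdisj
    have hthatA : that ∉ A := hthat_notin A hA
    have hthatB : that ∉ B := hthat_notin B hB
    have hτ2 : xCut G x A + xCut G x B < 3 := by linarith
    -- card identities
    have e1 : (A ∩ T).card = ((A ∩ B) ∩ T).card + ((A \ B) ∩ T).card := by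
      rw [← Finset.card_union_of_disjoint (by
        rw [Finset.disjoint_left]; intro v hv1 hv2
        simp only [Finset.mem_inter, Finset.mem_sdiff] at hv1 hv2
        exact hv2.1.2 hv1.1.2)]
      congr 1
      ext v
      simp only [Finset.mem_inter, Finset.mem_union, Finset.mem_sdiff]
      tauto
    have e2 : (B ∩ T).card = ((A ∩ B) ∩ T).card + ((B \ A) ∩ T).card := by
      rw [← Finset.card_union_of_disjoint (by
        rw [Finset.disjoint_left]; intro v hv1 hv2
        simp only [Finset.mem_inter, Finset.mem_sdiff] at hv1 hv2
        exact hv2.1.2 hv1.1.1)]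
      congr 1
      ext v
      simp only [Finset.mem_inter, Finset.mem_union, Finset.mem_sdiff]
      tauto
    have e3 : ((A ∪ B) ∩ T).card = ((A \ B) ∩ T).card + (B ∩ T).card := by
      rw [← Finset.card_union_of_disjoint (by
        rw [Finset.disjoint_left]; intro v hv1 hv2
        simp only [Finset.mem_inter, Finset.mem_sdiff] at hv1 hv2
        exact hv1.1.2 hv2.1)]
      congr 1
      ext v
      simp only [Finset.mem_inter, Finset.mem_union, Finset.mem_sdiff]
      tauto
    by_cases hpar : Even (((A ∩ B) ∩ T).card)
    · -- A∩B and A∪B are T-even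
      have hunion_even : Even (((A ∪ B) ∩ T).card) := by
        rw [Nat.even_iff] at hpar ⊢
        rw [Nat.odd_iff] at hA2 hB2
        omega
      have h1 : 2 ≤ xCut G x (A ∩ B) := heven _ hABne
        (fun h => hthatA (Finset.mem_inter.mp (h ▸ Finset.mem_univ that)).1) hpar
      have h2 : 2 ≤ xCut G x (A ∪ B) := heven _ (hABne.mono (Finset.inter_subset_left.trans
        Finset.subset_union_left))
        (fun h => (Finset.mem_union.mp (h ▸ Finset.mem_univ that)).elim hthatA hthatB)
        hunion_even
      have := xCut_submod_inter_union G x hx0 A B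
      linarith
    · -- A\B and B\A are T-even
      rw [Nat.not_even_iff_odd] at hpar
      have hd1 : Even (((A \ B) ∩ T).card) := by
        rw [Nat.even_iff]; rw [Nat.odd_iff] at hpar hA2; omega
      have hd2 : Even (((B \ A) ∩ T).card) := by
        rw [Nat.even_iff]; rw [Nat.odd_iff] at hpar hB2; omega
      have h1 : 2 ≤ xCut G x (A \ B) := heven _ (Finset.sdiff_nonempty.mpr hAB)
        (fun h => hthatA (Finset.mem_sdiff.mp (h ▸ Finset.mem_univ that)).1) hd1
      have h2 : 2 ≤ xCut G x (B \ A) := heven _ (Finset.sdiff_nonempty.mpr hBA)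
        (fun h => hthatB (Finset.mem_sdiff.mp (h ▸ Finset.mem_univ that)).1) hd2
      have := xCut_submod_diff G x hx0 A B
      linarith
  refine ⟨?_, ?_, ?_, ?_, ?_⟩
  · -- nonemptiness of each g(U)
    intro U hU
    by_contra hge
    rw [Finset.not_nonempty_iff_eq_empty] at hge
    have hcov : ∀ v ∈ U, ∃ W ∈ L', W ⊂ U ∧ v ∈ W := by
      intro v hv
      by_contra hc
      push_neg at hc
      have : v ∈ U.filter (fun v => ∀ W ∈ L', W ⊂ U → v ∉ W) :=
        Finset.mem_filter.mpr ⟨hv, fun W hW hWU => hc W hW hWU⟩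
      rw [hge] at this
      exact absurd this (Finset.notMem_empty v)
    set M := L'.filter (fun W => W ⊂ U ∧ ∀ W' ∈ L', W' ⊂ U → W ⊆ W' → W = W') with hMdef
    have hMmem : ∀ W ∈ M, W ∈ L' ∧ W ⊂ U ∧ (∀ W' ∈ L', W' ⊂ U → W ⊆ W' → W = W') := by
      intro W hW
      have := Finset.mem_filter.mp hW
      exact ⟨this.1, this.2.1, this.2.2⟩
    have hMcover : ∀ v ∈ U, ∃ W ∈ M, v ∈ W := by
      intro v hv
      obtain ⟨W0, hW0, hW0U, hvW0⟩ := hcov v hv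
      have hCne : (L'.filter (fun W => W ⊂ U ∧ v ∈ W)).Nonempty :=
        ⟨W0, Finset.mem_filter.mpr ⟨hW0, hW0U, hvW0⟩⟩
      obtain ⟨W, hWC, hmax⟩ := Finset.exists_max_image _ Finset.card hCne
      have hW := Finset.mem_filter.mp hWC
      refine ⟨W, Finset.mem_filter.mpr ⟨hW.1, hW.2.1, ?_⟩, hW.2.2⟩
      intro W' hW' hW'U hsub
      have hW'C : W' ∈ L'.filter (fun W => W ⊂ U ∧ v ∈ W) :=
        Finset.mem_filter.mpr ⟨hW', hW'U, hsub hW.2.2⟩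
      exact Finset.eq_of_subset_of_card_le hsub (hmax W' hW'C)
    have hMdisj : ∀ W₁ ∈ M, ∀ W₂ ∈ M, W₁ ≠ W₂ → Disjoint W₁ W₂ := by
      intro W₁ h1 W₂ h2 hne
      obtain ⟨h1L, h1U, h1max⟩ := hMmem W₁ h1
      obtain ⟨h2L, h2U, h2max⟩ := hMmem W₂ h2
      rcases laminar W₁ h1L W₂ h2L with h | h | h
      · exact absurd (h1max W₂ h2L h2U h) hne
      · exact absurd (h2max W₁ h1L h1U h).symm hne
      · exact h
    have hMU : M.biUnion id = U := by
      apply subset_antisymm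
      · intro v hv
        obtain ⟨W, hW, hvW⟩ := Finset.mem_biUnion.mp hv
        exact (hMmem W hW).2.1.1 hvW
      · intro v hv
        obtain ⟨W, hW, hvW⟩ := hMcover v hv
        exact Finset.mem_biUnion.mpr ⟨W, hW, hvW⟩
    have hUodd := (hL' U hU).2.1
    have hUnarrow := (hL' U hU).2.2
    -- parity: M.card is odd
    have hUcard : (U ∩ T).card = ∑ W ∈ M, (W ∩ T).card := by
      rw [← hMU]
      have : (M.biUnion id) ∩ T = M.biUnion (fun W => W ∩ T) := by
        ext v
        simp only [Finset.mem_inter, Finset.mem_biUnion, id]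
        tauto
      rw [this]
      exact Finset.card_biUnion (fun W₁ h1 W₂ h2 hne =>
        (hMdisj W₁ h1 W₂ h2 hne).mono Finset.inter_subset_left Finset.inter_subset_left)
    have hModd : Odd M.card := by
      rw [← odd_sum_iff_odd_card M (fun W => (W ∩ T).card)
        (fun W hW => (hL' W ((hMmem W hW).1)).2.1)]
      rw [← hUcard]
      exact hUodd
    have hMne1 : M.card ≠ 1 := by
      intro h
      obtain ⟨W, hW⟩ := Finset.card_eq_one.mp h
      have hWM : W ∈ M := by rw [hW]; exact Finset.mem_singleton_self W
      have : M.biUnion id = W := by rw [hW]; simp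
      exact absurd (this ▸ hMU : W = U) (hMmem W hWM).2.1.ne
    have hM3 : 3 ≤ M.card := by
      rw [Nat.odd_iff] at hModd
      have : M.card ≠ 0 := by
        intro h
        obtain ⟨v, hv⟩ := hnonempty U hU
        obtain ⟨W, hW, _⟩ := hMcover v hv
        rw [Finset.card_eq_zero.mp h] at hW
        exact absurd hW (Finset.notMem_empty W)
      omega
    -- the partition inequality
    have hthatU : that ∉ U := hthat_notin U hU
    have hUc_notM : Uᶜ ∉ M := by
      intro h
      have hsub := (hMmem _ h).2.1.1
      exact hthatU (hsub (Finset.mem_compl.mpr hthatU))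
    set P := insert Uᶜ M with hPdef
    have hP1 : ∀ p ∈ P, p.Nonempty := by
      intro p hp
      rcases Finset.mem_insert.mp hp with h | h
      · exact ⟨that, h ▸ Finset.mem_compl.mpr hthatU⟩
      · exact hnonempty p (hMmem p h).1
    have hP2 : (P : Set (Finset V)).PairwiseDisjoint id := by
      intro a ha b hb hne
      simp only [hPdef, Finset.coe_insert, Set.mem_insert_iff, Finset.mem_coe] at ha hb
      rcases ha with ha | ha <;> rcases hb with hb | hb
      · exact absurd (ha.trans hb.symm) hne
      · subst ha
        exact (disjoint_compl_left).mono_right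
          (Finset.le_iff_subset.mpr (hMmem b hb).2.1.1)
      · subst hb
        exact ((disjoint_compl_left).mono_right
          (Finset.le_iff_subset.mpr (hMmem a ha).2.1.1)).symm
      · exact hMdisj a ha b hb hne
    have hP3 : P.biUnion id = univ := by
      apply Finset.eq_univ_of_forall
      intro v
      rw [Finset.mem_biUnion]
      by_cases hv : v ∈ U
      · obtain ⟨W, hW, hvW⟩ := hMcover v hv
        exact ⟨W, Finset.mem_insert_of_mem hW, hvW⟩
      · exact ⟨Uᶜ, Finset.mem_insert_self _ _, Finset.mem_compl.mpr hv⟩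
    have hineq := hpart P hP1 hP2 hP3
    have hPcard : P.card = M.card + 1 := Finset.card_insert_of_notMem hUc_notM
    have hPsum : ∑ p ∈ P, xCut G x p = xCut G x U + ∑ W ∈ M, xCut G x W := by
      rw [hPdef, Finset.sum_insert hUc_notM, xCut_compl]
    have hMne : M.Nonempty := Finset.card_pos.mp (by omega)
    have hsumlt : ∑ W ∈ M, xCut G x W < (M.card : ℝ) + (M.card : ℝ) * τ := by
      have := Finset.sum_lt_sum_of_nonempty hMne
        (f := fun W => xCut G x W) (g := fun _ => 1 + τ)
        (fun W hW => (hL' W (hMmem W hW).1).2.2)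
      simpa using this
    have hm3 : (3:ℝ) ≤ (M.card : ℝ) := by exact_mod_cast hM3
    rw [hPcard, hPsum] at hineq
    push_cast at hineq
    nlinarith [hineq, hsumlt, hUnarrow, hm3, hτ, hτ0]
  · -- V \ ∪L' is nonempty
    refine ⟨that, ?_⟩
    simp only [Finset.mem_sdiff, Finset.mem_univ, true_and, Finset.mem_biUnion, id]
    push_neg
    exact fun W hW => hthat_notin W hW
  · -- pairwise disjointness of the g(U)
    intro U₁ h1 U₂ h2 hne
    rcases laminar U₁ h1 U₂ h2 with h | h | h
    · have hss : U₁ ⊂ U₂ := Finset.ssubset_iff_subset_ne.mpr ⟨h, hne⟩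
      rw [Finset.disjoint_left]
      intro v hv1 hv2
      have hv1' := Finset.mem_filter.mp hv1
      have hv2' := Finset.mem_filter.mp hv2
      exact hv2'.2 U₁ h1 hss hv1'.1
    · have hss : U₂ ⊂ U₁ := Finset.ssubset_iff_subset_ne.mpr ⟨h, hne.symm⟩
      rw [Finset.disjoint_left]
      intro v hv1 hv2
      have hv1' := Finset.mem_filter.mp hv1
      have hv2' := Finset.mem_filter.mp hv2
      exact hv1'.2 U₂ h2 hss hv2'.1
    · exact h.mono (Finset.filter_subset _ _) (Finset.filter_subset _ _)
  · -- g(U) disjoint from V \ ∪L'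
    intro U hU
    rw [Finset.disjoint_left]
    intro v hv hv2
    have hv' := Finset.mem_filter.mp hv
    have := (Finset.mem_sdiff.mp hv2).2
    exact this (Finset.mem_biUnion.mpr ⟨U, hU, hv'.1⟩)
  · -- covering
    apply Finset.eq_univ_of_forall
    intro v
    rw [Finset.mem_union]
    by_cases hv : v ∈ L'.biUnion id
    · right
      rw [Finset.mem_biUnion] at hv ⊢
      obtain ⟨W0, hW0, hvW0⟩ := hv
      have hCne : (L'.filter (fun W => v ∈ W)).Nonempty :=
        ⟨W0, Finset.mem_filter.mpr ⟨hW0, hvW0⟩⟩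
      obtain ⟨U, hUC, hmin⟩ := Finset.exists_min_image _ Finset.card hCne
      have hU := Finset.mem_filter.mp hUC
      refine ⟨U, hU.1, Finset.mem_filter.mpr ⟨hU.2, ?_⟩⟩
      intro W hW hWU hvW
      have hWC : W ∈ L'.filter (fun W => v ∈ W) := Finset.mem_filter.mpr ⟨hW, hvW⟩
      exact absurd (hmin W hWC) (not_le_of_gt (Finset.card_lt_card hWU))
    · left
      exact Finset.mem_sdiff.mpr ⟨Finset.mem_univ v, hv⟩
end

section
/- Let J be a tree with vertex set V, let T ⊆ V be of even cardinality, and let D be the wrong-degree set of J with respect to T (nodes of T with even degree in J and nodes of V∖T with odd degree in J). Let Q ⊆ V be a T-odd set with ∅ ⊊ Q ⊊ V. Then there exists an edge e ∈ δ_J(Q) such that the two connected components of J − e each contain an even number of nodes of D; in particular, δ_J(Q) strictly contains δ_{M'}(Q) for any D-join M′ consisting of edges of J each used at most once. -/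
open Finset
open scoped Classical

private lemma zmod2_card_filter_mem {V : Type*} [Fintype V] [DecidableEq V]
    (S : Finset V) (e : Sym2 V) (he : ¬ e.IsDiag) :
    ((S.filter (fun v => v ∈ e)).card : ZMod 2) =
      if (∃ u ∈ e, u ∈ S) ∧ (∃ w ∈ e, w ∉ S) then 1 else 0 := by
  induction e with
  | _ x y =>
    rw [Sym2.mk_isDiag_iff] at he
    have hfun : S.filter (fun v => v ∈ (s(x, y) : Sym2 V)) = S.filter (fun v => v = x ∨ v = y) :=
      Finset.filter_congr fun v _ => by simp [Sym2.mem_iff]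
    rw [hfun, Finset.filter_or, Finset.filter_eq', Finset.filter_eq']
    by_cases hx : x ∈ S <;> by_cases hy : y ∈ S <;>
      simp [hx, hy, Finset.card_union_of_disjoint, he, Ne.symm he, Sym2.mem_iff] <;>
      decide

private lemma zmod2_handshake {V : Type*} [Fintype V] [DecidableEq V]
    (M : Finset (Sym2 V)) (hM : ∀ e ∈ M, ¬ e.IsDiag) (S : Finset V) :
    (∑ v ∈ S, ((M.filter (fun e => v ∈ e)).card : ZMod 2)) =
      ((M.filter (fun e => (∃ u ∈ e, u ∈ S) ∧ (∃ w ∈ e, w ∉ S))).card : ZMod 2) := by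
  calc (∑ v ∈ S, ((M.filter (fun e => v ∈ e)).card : ZMod 2))
      = ∑ v ∈ S, ∑ e ∈ M, if v ∈ e then (1 : ZMod 2) else 0 :=
        Finset.sum_congr rfl fun v _ => (Finset.sum_boole _ _).symm
    _ = ∑ e ∈ M, ∑ v ∈ S, if v ∈ e then (1 : ZMod 2) else 0 := Finset.sum_comm
    _ = ∑ e ∈ M, if (∃ u ∈ e, u ∈ S) ∧ (∃ w ∈ e, w ∉ S) then (1 : ZMod 2) else 0 :=
        Finset.sum_congr rfl fun e heM => by
          rw [Finset.sum_boole]; exact zmod2_card_filter_mem S e (hM e heM)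
    _ = _ := Finset.sum_boole _ _

private lemma zmod2_rearrange : ∀ a b c d : ZMod 2, a + b = c + d → a + c = b + d := by decide

private lemma zmod2_solve : ∀ a b c : ZMod 2, a + b = c → a = c + b := by decide

theorem stmt16 {V : Type*} [Fintype V] [DecidableEq V]
    (J : SimpleGraph V) [DecidableRel J.Adj] (hJ : J.IsTree)
    (T : Finset V) (hTeven : Even T.card)
    (D : Finset V)
    (hD : ∀ v, v ∈ D ↔ ((v ∈ T ∧ Even (J.degree v)) ∨ (v ∉ T ∧ Odd (J.degree v))))
    (Q : Finset V) (hQne : Q.Nonempty) (hQuniv : Q ≠ univ)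
    (hQodd : Odd ((Q ∩ T).card)) :
    -- there is an edge of δ_J(Q) whose removal leaves two D-even components
    (∃ a b : V, a ∈ Q ∧ b ∉ Q ∧ J.Adj a b ∧
      Even (((univ.filter (fun v => (J.deleteEdges {s(a, b)}).Reachable a v)) ∩ D).card) ∧
      Even (((univ.filter (fun v => (J.deleteEdges {s(a, b)}).Reachable b v)) ∩ D).card)) ∧
    -- in particular, δ_{M'}(Q) is a proper subset of δ_J(Q) for any D-join M'
    -- consisting of edges of J, each used at most once
    (∀ M : Finset (Sym2 V), (∀ e ∈ M, e ∈ J.edgeSet) →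
      (∀ v, (Odd ((M.filter (fun e => v ∈ e)).card) ↔ v ∈ D)) →
      M.filter (fun e => (∃ u ∈ e, u ∈ Q) ∧ (∃ w ∈ e, w ∉ Q)) ⊂
        J.edgeFinset.filter (fun e => (∃ u ∈ e, u ∈ Q) ∧ (∃ w ∈ e, w ∉ Q))) := by
  classical
  have hacyclic := hJ.IsAcyclic
  have hconn := hJ.isConnected
  have hEnd : ∀ e ∈ J.edgeFinset, ¬ e.IsDiag := fun e he =>
    (SimpleGraph.not_isDiag_of_mem_edgeSet J (SimpleGraph.mem_edgeFinset.mp he))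
  have hdeg : ∀ v, (J.degree v : ZMod 2) = ((J.edgeFinset.filter (fun e => v ∈ e)).card : ZMod 2) := by
    intro v
    rw [← SimpleGraph.card_incidenceFinset_eq_degree, SimpleGraph.incidenceFinset_eq_filter]
  -- the key parity identity: |S ∩ D| ≡ |δ_J(S)| + |S ∩ T| (mod 2)
  have L1 : ∀ S : Finset V, ((S ∩ D).card : ZMod 2)
      = ((J.edgeFinset.filter (fun e => (∃ u ∈ e, u ∈ S) ∧ (∃ w ∈ e, w ∉ S))).card : ZMod 2)
        + ((S ∩ T).card : ZMod 2) := by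
    intro S
    have hchi : ∀ v, (if v ∈ D then (1 : ZMod 2) else 0)
        = (J.degree v : ZMod 2) + (if v ∈ T then 1 else 0) := by
      intro v
      by_cases hT : v ∈ T <;> by_cases hE : Even (J.degree v)
      · rw [show ((J.degree v : ZMod 2)) = 0 from ZMod.natCast_eq_zero_iff_even.mpr hE]
        have hvD : v ∈ D := (hD v).mpr (Or.inl ⟨hT, hE⟩)
        simp [hvD, hT]
      · rw [show ((J.degree v : ZMod 2)) = 1 from
          ZMod.natCast_eq_one_iff_odd.mpr (Nat.not_even_iff_odd.mp hE)]
        have hvD : v ∉ D := by simp [hD, hT, hE]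
        simp only [hvD, hT, if_false, if_true]
        decide
      · rw [show ((J.degree v : ZMod 2)) = 0 from ZMod.natCast_eq_zero_iff_even.mpr hE]
        have hvD : v ∉ D := by simp [hD, hT, hE]
        simp [hvD, hT]
      · rw [show ((J.degree v : ZMod 2)) = 1 from
          ZMod.natCast_eq_one_iff_odd.mpr (Nat.not_even_iff_odd.mp hE)]
        have hvD : v ∈ D := (hD v).mpr (Or.inr ⟨hT, Nat.not_even_iff_odd.mp hE⟩)
        simp [hvD, hT]
    calc ((S ∩ D).card : ZMod 2)
        = ∑ v ∈ S, if v ∈ D then (1 : ZMod 2) else 0 := by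
          rw [Finset.sum_boole, Finset.filter_mem_eq_inter]
      _ = ∑ v ∈ S, ((J.degree v : ZMod 2) + (if v ∈ T then 1 else 0)) :=
          Finset.sum_congr rfl fun v _ => hchi v
      _ = (∑ v ∈ S, ((J.edgeFinset.filter (fun e => v ∈ e)).card : ZMod 2))
            + ∑ v ∈ S, (if v ∈ T then (1 : ZMod 2) else 0) := by
          rw [← Finset.sum_add_distrib]
          exact Finset.sum_congr rfl fun v _ => by rw [hdeg v]
      _ = _ := by
          rw [zmod2_handshake _ hEnd S, Finset.sum_boole, Finset.filter_mem_eq_inter]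
  -- |D| is even
  have hDeven : ((D.card : ZMod 2)) = 0 := by
    have h := L1 univ
    have h0 : (J.edgeFinset.filter
        (fun e => (∃ u ∈ e, u ∈ (univ : Finset V)) ∧ (∃ w ∈ e, w ∉ (univ : Finset V)))) = ∅ := by
      apply Finset.filter_eq_empty_iff.mpr
      intro e _
      simp
    rw [Finset.univ_inter, Finset.univ_inter, h0] at h
    rw [h, Finset.card_empty, Nat.cast_zero, zero_add, ZMod.natCast_eq_zero_iff_even]
    exact hTeven
  -- Part 2: the D-join cut is a proper subset of the tree cut
  have part2 : ∀ M : Finset (Sym2 V), (∀ e ∈ M, e ∈ J.edgeSet) →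
      (∀ v, (Odd ((M.filter (fun e => v ∈ e)).card) ↔ v ∈ D)) →
      M.filter (fun e => (∃ u ∈ e, u ∈ Q) ∧ (∃ w ∈ e, w ∉ Q)) ⊂
        J.edgeFinset.filter (fun e => (∃ u ∈ e, u ∈ Q) ∧ (∃ w ∈ e, w ∉ Q)) := by
    intro M hME hMdeg
    have hsub : M ⊆ J.edgeFinset := fun e he => SimpleGraph.mem_edgeFinset.mpr (hME e he)
    have hMnd : ∀ e ∈ M, ¬ e.IsDiag := fun e he =>
      SimpleGraph.not_isDiag_of_mem_edgeSet J (hME e he)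
    have h1 : ((M.filter (fun e => (∃ u ∈ e, u ∈ Q) ∧ (∃ w ∈ e, w ∉ Q))).card : ZMod 2)
        = ((Q ∩ D).card : ZMod 2) := by
      rw [← zmod2_handshake M hMnd Q]
      have hterm : ∀ v, ((M.filter (fun e => v ∈ e)).card : ZMod 2)
          = if v ∈ D then 1 else 0 := by
        intro v
        by_cases hv : v ∈ D
        · rw [ZMod.natCast_eq_one_iff_odd.mpr ((hMdeg v).mpr hv)]; simp [hv]
        · rw [ZMod.natCast_eq_zero_iff_even.mpr (Nat.not_odd_iff_even.mp (fun ho => hv ((hMdeg v).mp ho)))]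
          simp [hv]
      rw [Finset.sum_congr rfl fun v _ => hterm v, Finset.sum_boole, Finset.filter_mem_eq_inter]
    have h2 : ((J.edgeFinset.filter (fun e => (∃ u ∈ e, u ∈ Q) ∧ (∃ w ∈ e, w ∉ Q))).card : ZMod 2)
        = ((Q ∩ D).card : ZMod 2) + 1 := by
      have h := L1 Q
      rw [show (((Q ∩ T).card : ZMod 2)) = 1 from ZMod.natCast_eq_one_iff_odd.mpr hQodd] at h
      rw [h, add_assoc, show (1 : ZMod 2) + 1 = 0 by decide, add_zero]
    refine Finset.ssubset_iff_subset_ne.mpr ⟨Finset.filter_subset_filter _ hsub, fun hEq => ?_⟩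
    rw [hEq, h2] at h1
    have : (1 : ZMod 2) = 0 := by linear_combination h1
    exact one_ne_zero this
  -- Part 1
  have hbridge : ∀ x y : V, J.Adj x y → ¬ (J.deleteEdges {s(x, y)}).Reachable x y := by
    intro x y hxy
    exact ((SimpleGraph.isBridge_iff).mp
      ((SimpleGraph.isAcyclic_iff_forall_adj_isBridge.mp hacyclic) hxy))
  set P : Finset (V × V) :=
    univ.filter (fun p => J.Adj p.1 p.2 ∧ p.1 ∈ Q ∧ p.2 ∉ Q) with hPdef
  set g : V → ZMod 2 := fun v =>
    ((P.filter (fun p => (J.deleteEdges {s(p.1, p.2)}).Reachable p.1 v)).card : ZMod 2) with hgdef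
  have crossing : ∀ x y : V, J.Adj x y →
      g x + g y = (if x ∈ Q then (1 : ZMod 2) else 0) + (if y ∈ Q then 1 else 0) := by
    intro x y hxy
    have hgx : ∀ v, g v = ∑ p ∈ P,
        if (J.deleteEdges {s(p.1, p.2)}).Reachable p.1 v then (1 : ZMod 2) else 0 := by
      intro v; rw [hgdef]; exact (Finset.sum_boole _ _).symm
    rw [hgx x, hgx y, ← Finset.sum_add_distrib]
    have hterm : ∀ p ∈ P,
        ((if (J.deleteEdges {s(p.1, p.2)}).Reachable p.1 x then (1 : ZMod 2) else 0)
          + if (J.deleteEdges {s(p.1, p.2)}).Reachable p.1 y then (1 : ZMod 2) else 0)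
        = if p = (x, y) ∨ p = (y, x) then 1 else 0 := by
      rintro ⟨a, b⟩ hp
      rw [hPdef, Finset.mem_filter] at hp
      obtain ⟨-, hab, haQ, hbQ⟩ := hp
      by_cases hpe : s(a, b) = s(x, y)
      · rcases Sym2.eq_iff.mp hpe with ⟨rfl, rfl⟩ | ⟨rfl, rfl⟩
        · show ((if (J.deleteEdges {s(a, b)}).Reachable a a then (1 : ZMod 2) else 0) +
              if (J.deleteEdges {s(a, b)}).Reachable a b then (1 : ZMod 2) else 0) =
            if ((a, b) : V × V) = (a, b) ∨ ((a, b) : V × V) = (b, a) then 1 else 0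
          rw [if_pos (SimpleGraph.Reachable.refl a), if_neg (hbridge a b hab), add_zero,
            if_pos (Or.inl rfl)]
        · show ((if (J.deleteEdges {s(a, b)}).Reachable a b then (1 : ZMod 2) else 0) +
              if (J.deleteEdges {s(a, b)}).Reachable a a then (1 : ZMod 2) else 0) =
            if ((a, b) : V × V) = (b, a) ∨ ((a, b) : V × V) = (a, b) then 1 else 0
          rw [if_neg (hbridge a b hab), if_pos (SimpleGraph.Reachable.refl a), zero_add,
            if_pos (Or.inr rfl)]
      · have hne : ¬((a, b) = (x, y) ∨ (a, b) = (y, x)) := by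
          rintro (⟨rfl, rfl⟩ | ⟨rfl, rfl⟩)
          · exact hpe rfl
          · exact hpe Sym2.eq_swap
        have hadj : (J.deleteEdges {s(a, b)}).Adj x y := by
          rw [SimpleGraph.deleteEdges_adj]
          refine ⟨hxy, fun hmem => hpe (Set.mem_singleton_iff.mp hmem).symm⟩
        have hiff : (J.deleteEdges {s(a, b)}).Reachable a x ↔
            (J.deleteEdges {s(a, b)}).Reachable a y :=
          ⟨fun h => h.trans hadj.reachable, fun h => h.trans hadj.symm.reachable⟩
        rw [if_neg hne]
        by_cases hr : (J.deleteEdges {s(a, b)}).Reachable a x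
        · rw [if_pos hr, if_pos (hiff.mp hr)]; decide
        · rw [if_neg hr, if_neg (fun h => hr (hiff.mpr h)), add_zero]
    rw [Finset.sum_congr rfl hterm, Finset.sum_boole]
    -- now compute the cardinality of pairs from {(x,y),(y,x)} lying in P
    have hsplit : P.filter (fun p => p = (x, y) ∨ p = (y, x))
        = (P.filter (fun p => p = (x, y))) ∪ (P.filter (fun p => p = (y, x))) :=
      Finset.filter_or _ _ _
    have hmem1 : ((x, y) ∈ P) ↔ (x ∈ Q ∧ y ∉ Q) := by
      rw [hPdef]; simp [hxy]
    have hmem2 : ((y, x) ∈ P) ↔ (y ∈ Q ∧ x ∉ Q) := by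
      rw [hPdef]; simp [hxy.symm]
    have hd : ((x, y) : V × V) ≠ (y, x) := by
      intro h
      obtain ⟨rfl, -⟩ := Prod.mk.inj h
      exact hxy.ne rfl
    rw [hsplit, Finset.filter_eq', Finset.filter_eq']
    by_cases hx : x ∈ Q <;> by_cases hy : y ∈ Q
    · rw [if_neg (fun h => (hmem1.mp h).2 hy), if_neg (fun h => (hmem2.mp h).2 hx)]
      simp only [Finset.empty_union, Finset.card_empty, Nat.cast_zero, hx, hy, if_true]
      decide
    · rw [if_pos (hmem1.mpr ⟨hx, hy⟩), if_neg (fun h => (hmem2.mp h).2 hx)]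
      simp [hx, hy]
    · rw [if_neg (fun h => hx (hmem1.mp h).1), if_pos (hmem2.mpr ⟨hy, hx⟩)]
      simp [hx, hy]
    · rw [if_neg (fun h => hx (hmem1.mp h).1), if_neg (fun h => hy (hmem2.mp h).1)]
      simp only [Finset.empty_union, Finset.card_empty, Nat.cast_zero, hx, hy, if_false]
      decide
  obtain ⟨q0, hq0⟩ := hQne
  have const : ∀ v : V, g v + (if v ∈ Q then (1 : ZMod 2) else 0)
      = g q0 + (if q0 ∈ Q then 1 else 0) := by
    have step : ∀ (u v : V), J.Walk u v →
        g u + (if u ∈ Q then (1 : ZMod 2) else 0) = g v + (if v ∈ Q then 1 else 0) := by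
      intro u v w
      induction w with
      | nil => rfl
      | @cons u x v h q ih =>
        have hc := crossing u x h
        have hux : g u + (if u ∈ Q then (1 : ZMod 2) else 0)
            = g x + (if x ∈ Q then 1 else 0) := zmod2_rearrange _ _ _ _ hc
        rw [hux]; exact ih
    intro v
    obtain ⟨w⟩ := hconn.preconnected v q0
    exact step v q0 w
  have sumT : ∑ v ∈ T, g v = 1 := by
    have hrw : ∀ v ∈ T, g v = (g q0 + (if q0 ∈ Q then (1 : ZMod 2) else 0))
        + (if v ∈ Q then 1 else 0) := by
      intro v _
      exact zmod2_solve _ _ _ (const v)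
    rw [Finset.sum_congr rfl hrw, Finset.sum_add_distrib, Finset.sum_const, nsmul_eq_mul,
      Finset.sum_boole, Finset.filter_mem_eq_inter,
      show ((T.card : ZMod 2)) = 0 from ZMod.natCast_eq_zero_iff_even.mpr hTeven,
      show (((T ∩ Q).card : ZMod 2)) = 1 from
        ZMod.natCast_eq_one_iff_odd.mpr (by rwa [Finset.inter_comm] at hQodd)]
    ring
  have sum_swap : ∑ v ∈ T, g v = ∑ p ∈ P,
      ((T.filter (fun v => (J.deleteEdges {s(p.1, p.2)}).Reachable p.1 v)).card : ZMod 2) := by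
    calc ∑ v ∈ T, g v
        = ∑ v ∈ T, ∑ p ∈ P,
            if (J.deleteEdges {s(p.1, p.2)}).Reachable p.1 v then (1 : ZMod 2) else 0 :=
          Finset.sum_congr rfl fun v _ => (Finset.sum_boole _ _).symm
      _ = ∑ p ∈ P, ∑ v ∈ T,
            if (J.deleteEdges {s(p.1, p.2)}).Reachable p.1 v then (1 : ZMod 2) else 0 :=
          Finset.sum_comm
      _ = _ := Finset.sum_congr rfl fun p _ => Finset.sum_boole _ _
  have hex : ∃ p ∈ P,
      ((T.filter (fun v => (J.deleteEdges {s(p.1, p.2)}).Reachable p.1 v)).card : ZMod 2) ≠ 0 := by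
    by_contra hcon
    push_neg at hcon
    have hzero : ∑ p ∈ P,
        ((T.filter (fun v => (J.deleteEdges {s(p.1, p.2)}).Reachable p.1 v)).card : ZMod 2) = 0 :=
      Finset.sum_eq_zero hcon
    rw [← sum_swap, sumT] at hzero
    exact one_ne_zero hzero
  obtain ⟨⟨a, b⟩, hpP, hpne⟩ := hex
  rw [hPdef, Finset.mem_filter] at hpP
  obtain ⟨-, hab, haQ, hbQ⟩ := hpP
  have hodd : Odd ((T.filter (fun v => (J.deleteEdges {s(a, b)}).Reachable a v)).card) := by
    rcases Nat.even_or_odd ((T.filter (fun v => (J.deleteEdges {s(a, b)}).Reachable a v)).card)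
      with h | h
    · exact absurd (ZMod.natCast_eq_zero_iff_even.mpr h) hpne
    · exact h
  set Gd := J.deleteEdges {s(a, b)} with hGddef
  set Ca : Finset V := univ.filter (fun v => Gd.Reachable a v) with hCadef
  set Cb : Finset V := univ.filter (fun v => Gd.Reachable b v) with hCbdef
  have hnotab : ¬ Gd.Reachable a b := hbridge a b hab
  have haCa : a ∈ Ca := by
    rw [hCadef, Finset.mem_filter]
    exact ⟨Finset.mem_univ _, SimpleGraph.Reachable.refl a⟩
  have hbCa : b ∉ Ca := by rw [hCadef]; simpa using hnotab
  have hCaT : Odd ((Ca ∩ T).card) := by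
    have hset : Ca ∩ T = T.filter (fun v => Gd.Reachable a v) := by
      rw [hCadef]; ext v; simp [and_comm]
    rw [hset]; exact hodd
  -- closure of Ca under Gd-adjacency
  have hclosed : ∀ u w : V, Gd.Adj u w → u ∈ Ca → w ∈ Ca := by
    intro u w huw hu
    rw [hCadef, Finset.mem_filter] at hu ⊢
    exact ⟨Finset.mem_univ _, hu.2.trans huw.reachable⟩
  -- every vertex is reachable from a or from b in Gd
  have cover : ∀ v : V, Gd.Reachable a v ∨ Gd.Reachable b v := by
    have step : ∀ (u v : V), J.Walk u v →
        (Gd.Reachable a u ∨ Gd.Reachable b u) → (Gd.Reachable a v ∨ Gd.Reachable b v) := by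
      intro u v w
      induction w with
      | nil => exact id
      | @cons u x v h q ih =>
        intro hu
        apply ih
        by_cases hexy : s(u, x) = s(a, b)
        · rcases Sym2.eq_iff.mp hexy with ⟨rfl, rfl⟩ | ⟨rfl, rfl⟩
          · exact Or.inr (SimpleGraph.Reachable.refl _)
          · exact Or.inl (SimpleGraph.Reachable.refl _)
        · have hadj : Gd.Adj u x := by
            rw [hGddef, SimpleGraph.deleteEdges_adj]
            exact ⟨h, by simpa using hexy⟩
          exact hu.imp (fun hr => hr.trans hadj.reachable) (fun hr => hr.trans hadj.reachable)
    intro v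
    obtain ⟨w⟩ := hconn.preconnected a v
    exact step a v w (Or.inl (SimpleGraph.Reachable.refl a))
  -- the cut of Ca consists exactly of the edge ab
  have hcut : J.edgeFinset.filter (fun e => (∃ u ∈ e, u ∈ Ca) ∧ (∃ w ∈ e, w ∉ Ca))
      = {s(a, b)} := by
    ext f
    induction f with
    | _ x y =>
      simp only [Finset.mem_filter, Finset.mem_singleton, SimpleGraph.mem_edgeFinset,
        SimpleGraph.mem_edgeSet, Sym2.mem_iff]
      constructor
      · rintro ⟨hxy, ⟨u, hu, huCa⟩, ⟨w, hw, hwCa⟩⟩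
        by_cases hfe : s(x, y) = s(a, b)
        · exact hfe
        · exfalso
          have hadj : Gd.Adj x y := by
            rw [hGddef, SimpleGraph.deleteEdges_adj]
            exact ⟨hxy, by simpa using hfe⟩
          have hxCa : x ∈ Ca ↔ y ∈ Ca :=
            ⟨hclosed x y hadj, hclosed y x hadj.symm⟩
          rcases hu with rfl | rfl <;> rcases hw with rfl | rfl
          · exact hwCa huCa
          · exact hwCa (hxCa.mp huCa)
          · exact hwCa (hxCa.mpr huCa)
          · exact hwCa huCa
      · intro hfe
        rcases Sym2.eq_iff.mp hfe with ⟨rfl, rfl⟩ | ⟨rfl, rfl⟩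
        · exact ⟨hab, ⟨x, Or.inl rfl, haCa⟩, ⟨y, Or.inr rfl, hbCa⟩⟩
        · exact ⟨hab.symm, ⟨y, Or.inr rfl, haCa⟩, ⟨x, Or.inl rfl, hbCa⟩⟩
  have hCaD : Even ((Ca ∩ D).card) := by
    rw [← ZMod.natCast_eq_zero_iff_even, L1 Ca, hcut,
      show (((Ca ∩ T).card : ZMod 2)) = 1 from ZMod.natCast_eq_one_iff_odd.mpr hCaT,
      Finset.card_singleton, Nat.cast_one]
    decide
  have hCbcompl : Cb ∩ D = D \ Ca := by
    ext v
    rw [hCbdef, hCadef]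
    simp only [Finset.mem_inter, Finset.mem_filter, Finset.mem_univ, true_and, Finset.mem_sdiff]
    constructor
    · rintro ⟨hrb, hvD⟩
      exact ⟨hvD, fun hra => hnotab (hra.trans hrb.symm)⟩
    · rintro ⟨hvD, hra⟩
      rcases cover v with h | h
      · exact absurd h hra
      · exact ⟨h, hvD⟩
  have hCbD : Even ((Cb ∩ D).card) := by
    have hsplit : (D ∩ Ca).card + (D \ Ca).card = D.card := Finset.card_inter_add_card_sdiff D Ca
    have hDcard : Even D.card := ZMod.natCast_eq_zero_iff_even.mp hDeven
    rw [hCbcompl]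
    have h1 : Even ((D ∩ Ca).card) := by rwa [Finset.inter_comm]
    rw [← hsplit] at hDcard
    exact (Nat.even_add.mp hDcard).mp h1
  exact ⟨⟨a, b, haQ, hbQ, hab, hCaD, hCbD⟩, part2⟩
end

section
/- Let G=(V,E) be a graph, let T ⊆ V be nonempty of even cardinality with a designated root t* ∈ T, let I ⊆ V∖T, and let F be a connected T-join of the graph G∖I (the induced subgraph on V∖I). Then for every T-even set R with ∅ ⊊ R ⊆ V∖{t*} such that R ⊄ I, the number |δ_F(R)| of edges of F (counted with multiplicity) with exactly one endpoint in R is even and at least 2; and for every T-odd set Q ⊆ V∖{t*}, |δ_F(Q)| ≥ 1. In particular, the integral vector (x,Z) with x_e the multiplicity of e in F, Z_I = 1 and Z_X = 0 for X ≠ I is feasible for the prize-collecting LP (L.P.3). -/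
open Finset
open scoped Classical

variable {V : Type*}

/-- A symmetric function with zero diagonal has even double sum. -/
lemma even_double_sum {V : Type*} [Fintype V] [DecidableEq V] (f : V → V → ℕ)
    (hsymm : ∀ u w, f u w = f w u) (hdiag : ∀ u, f u u = 0) (R : Finset V) :
    Even (∑ u ∈ R, ∑ w ∈ R, f u w) := by
  letI : LinearOrder V := LinearOrder.lift' (Fintype.equivFin V) (Equiv.injective _)
  have h1 : ∑ u ∈ R, ∑ w ∈ R, f u w = ∑ p ∈ R ×ˢ R, f p.1 p.2 := by
    rw [Finset.sum_product]
  have h2 : ∑ p ∈ R ×ˢ R, f p.1 p.2 =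
      ∑ p ∈ (R ×ˢ R).filter (fun p => p.1 < p.2), f p.1 p.2 +
      ∑ p ∈ (R ×ˢ R).filter (fun p => ¬ p.1 < p.2), f p.1 p.2 :=
    (Finset.sum_filter_add_sum_filter_not ..).symm
  have h3 : ∑ p ∈ (R ×ˢ R).filter (fun p => ¬ p.1 < p.2), f p.1 p.2 =
      ∑ p ∈ (R ×ˢ R).filter (fun p => p.2 < p.1), f p.1 p.2 := by
    rw [← Finset.sum_filter_of_ne (p := fun p : V × V => p.2 < p.1)]
    · congr 1
      rw [Finset.filter_filter]
      congr 1
      ext p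
      constructor
      · rintro ⟨h, h'⟩; exact h'
      · intro h; exact ⟨not_lt_of_gt h, h⟩
    · intro p hp hne
      rcases lt_trichotomy p.1 p.2 with h | h | h
      · exact absurd h (Finset.mem_filter.mp hp).2
      · exact absurd (by rw [h, hdiag]) hne
      · exact h
  have h4 : ∑ p ∈ (R ×ˢ R).filter (fun p => p.2 < p.1), f p.1 p.2 =
      ∑ p ∈ (R ×ˢ R).filter (fun p => p.1 < p.2), f p.1 p.2 := by
    apply Finset.sum_nbij' (fun p => Prod.swap p) (fun p => Prod.swap p)
    · intro p hp
      simp only [Finset.mem_filter, Finset.mem_product] at hp ⊢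
      exact ⟨⟨hp.1.2, hp.1.1⟩, hp.2⟩
    · intro p hp
      simp only [Finset.mem_filter, Finset.mem_product] at hp ⊢
      exact ⟨⟨hp.1.2, hp.1.1⟩, hp.2⟩
    · intro p _; rfl
    · intro p _; rfl
    · intro p _; exact hsymm p.1 p.2
  rw [h1, h2, h3, h4]
  exact ⟨_, rfl⟩

/-- A walk from inside `R` to outside `R` uses an edge crossing `R`. -/
lemma exists_crossing_edge {V : Type*} [DecidableEq V] (F : Sym2 V → ℕ) (R : Finset V) :
    ∀ {v t : V}, (fromMultiset F).Walk v t → v ∈ R → t ∉ R →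
      ∃ a b, a ∈ R ∧ b ∉ R ∧ F s(a, b) ≠ 0 := by
  intro v t p
  induction p with
  | nil => intro hv ht; exact absurd hv ht
  | @cons u x w h p ih =>
    intro hv ht
    by_cases hx : x ∈ R
    · exact ih hx ht
    · exact ⟨u, x, hv, hx, (show u ≠ x ∧ F s(u, x) ≠ 0 from h).2⟩

theorem stmt17 {V : Type*} [Fintype V] [DecidableEq V]
    (G : SimpleGraph V)
    (T : Finset V) (hTne : T.Nonempty) (hTeven : Even T.card)
    (tstar : V) (htstar : tstar ∈ T)
    (I : Finset V) (hIT : Disjoint I T)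
    (F : Sym2 V → ℕ)
    -- F is a multiset of edges of the induced subgraph G \ I
    (hsupp : ∀ e, F e ≠ 0 → e ∈ G.edgeSet ∧ ∀ v ∈ e, v ∉ I)
    -- F is spanning and connected on V \ I
    (hconn : ∀ u ∉ I, ∀ w ∉ I, (fromMultiset F).Reachable u w)
    -- F is a T-join
    (hjoin : ∀ v, Odd (mDeg F v) ↔ v ∈ T) :
    -- each nonempty T-even R ⊆ V \ {t*} not contained in I has even cut of size ≥ 2
    (∀ R : Finset V, R.Nonempty → R ⊆ univ.erase tstar → Even ((R ∩ T).card) →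
      ¬ R ⊆ I → Even (mCut F R) ∧ 2 ≤ mCut F R) ∧
    -- each T-odd Q ⊆ V \ {t*} has cut of size ≥ 1
    (∀ Q : Finset V, Q ⊆ univ.erase tstar → Odd ((Q ∩ T).card) → 1 ≤ mCut F Q) ∧
    -- in particular, (x, Z) with x the multiplicity vector of F, Z_I = 1 and
    -- Z_X = 0 for X ≠ I is feasible for (L.P.3)
    (∀ R : Finset V, R.Nonempty → R ⊆ univ.erase tstar → Even ((R ∩ T).card) →
      2 ≤ (mCut F R : ℝ) + 2 * (if R ⊆ I then 1 else 0)) := by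
  -- no loops in F
  have hdiag : ∀ u : V, F s(u, u) = 0 := by
    intro u
    by_contra h
    exact G.irrefl ((SimpleGraph.mem_edgeSet G).mp (hsupp _ h).1)
  have hsymm : ∀ u w : V, F s(u, w) = F s(w, u) := by
    intro u w; rw [Sym2.eq_swap]
  -- parity: the cut across any R has the parity of |R ∩ T|
  have hparity : ∀ R : Finset V, (Even (mCut F R) ↔ Even ((R ∩ T).card)) := by
    intro R
    have hsplit : ∑ v ∈ R, mDeg F v =
        (∑ u ∈ R, ∑ w ∈ R, F s(u, w)) + mCut F R := by
      rw [mCut, ← Finset.sum_add_distrib]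
      apply Finset.sum_congr rfl
      intro u _
      rw [mDeg, Finset.sum_add_sum_compl]
    have hD : Even (∑ u ∈ R, ∑ w ∈ R, F s(u, w)) :=
      even_double_sum (fun u w => F s(u, w)) hsymm hdiag R
    have h1 : Even (∑ v ∈ R, mDeg F v) ↔ Even (mCut F R) := by
      rw [hsplit, Nat.even_add]
      constructor
      · intro h; exact h.mp hD
      · intro h; exact ⟨fun _ => h, fun _ => hD⟩
    rw [← h1, Finset.even_sum_iff_even_card_odd]
    have : R.filter (fun v => Odd (mDeg F v)) = R ∩ T := by
      rw [← Finset.filter_mem_eq_inter]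
      apply Finset.filter_congr
      intro v _
      simpa using hjoin v
    rw [this]
  -- positivity: cut ≥ 1 for any nonempty R avoiding t* and not contained in I
  have hpos : ∀ R : Finset V, R ⊆ univ.erase tstar → ¬ R ⊆ I → R.Nonempty →
      1 ≤ mCut F R := by
    intro R hR hRI _
    obtain ⟨v, hvR, hvI⟩ := Finset.not_subset.mp hRI
    have htI : tstar ∉ I := fun h => (Finset.disjoint_left.mp hIT h) htstar
    have htR : tstar ∉ R := fun h => (Finset.mem_erase.mp (hR h)).1 rfl
    obtain ⟨p⟩ := hconn v hvI tstar htI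
    obtain ⟨a, b, haR, hbR, hab⟩ := exists_crossing_edge F R p hvR htR
    have hb : b ∈ Rᶜ := Finset.mem_compl.mpr hbR
    calc 1 ≤ F s(a, b) := Nat.one_le_iff_ne_zero.mpr hab
      _ ≤ ∑ w ∈ Rᶜ, F s(a, w) := Finset.single_le_sum (f := fun w => F s(a, w)) (fun _ _ => Nat.zero_le _) hb
      _ ≤ mCut F R := Finset.single_le_sum
            (f := fun u => ∑ w ∈ Rᶜ, F s(u, w)) (fun _ _ => Nat.zero_le _) haR
  have main1 : ∀ R : Finset V, R.Nonempty → R ⊆ univ.erase tstar →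
      Even ((R ∩ T).card) → ¬ R ⊆ I → Even (mCut F R) ∧ 2 ≤ mCut F R := by
    intro R hne hR hev hRI
    have heven : Even (mCut F R) := (hparity R).mpr hev
    refine ⟨heven, ?_⟩
    have h1 := hpos R hR hRI hne
    rcases heven with ⟨k, hk⟩
    omega
  refine ⟨main1, ?_, ?_⟩
  · intro Q hQ hodd
    have h : ¬ Even (mCut F Q) := by
      rw [hparity Q, ← Nat.not_odd_iff_even, not_not]
      exact hodd
    rcases Nat.even_or_odd (mCut F Q) with h' | h'
    · exact absurd h' h
    · exact h'.pos
  · intro R hne hR hev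
    by_cases hRI : R ⊆ I
    · rw [if_pos hRI]
      have : (0 : ℝ) ≤ (mCut F R : ℝ) := Nat.cast_nonneg _
      linarith
    · rw [if_neg hRI]
      have h2 := (main1 R hne hR hev hRI).2
      have : (2 : ℝ) ≤ (mCut F R : ℝ) := by exact_mod_cast h2
      linarith
end

section
/- Let H be a tree whose vertex set is partitioned into a set A of 'active' vertices and a set B of 'inactive' vertices, where every vertex of B, except possibly one, has degree at least 2 in H. Then the sum of the degrees of the active vertices satisfies ∑_{v∈A} deg_H(v) ≤ 2|A| − 1. Consequently, if moreover A is partitioned into 𝓒 and 𝓒̂ with |𝓒| ≤ |T|−1 for some integer |T| ≥ 2, then ∑_{v∈𝓒} deg_H(v) + ∑_{v∈𝓒̂} deg_H(v) ≤ (2 − 1/(|T|−1))·|𝓒| + 2|𝓒̂|. -/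
open Finset

theorem stmt18 {V : Type*} [Fintype V] [DecidableEq V]
    (H : SimpleGraph V) [DecidableRel H.Adj] (hH : H.IsTree)
    (A : Finset V)
    -- every inactive vertex (vertex of Aᶜ), except possibly one, has degree ≥ 2
    (hdeg : ∃ w : V, ∀ v ∈ Aᶜ, v ≠ w → 2 ≤ H.degree v) :
    (∑ v ∈ A, H.degree v ≤ 2 * A.card - 1) ∧
    (∀ C Chat : Finset V, Disjoint C Chat → C ∪ Chat = A →
      ∀ m : ℕ, 2 ≤ m → C.card ≤ m - 1 →
      (∑ v ∈ C, (H.degree v : ℝ)) + ∑ v ∈ Chat, (H.degree v : ℝ) ≤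
        (2 - 1 / ((m : ℝ) - 1)) * C.card + 2 * Chat.card) := by
  classical
  have hpos : 2 ≤ Fintype.card V → ∀ v : V, 1 ≤ H.degree v := by
    intro h2 v
    obtain ⟨u, hu⟩ := Fintype.exists_ne_of_one_lt_card (by omega) v
    obtain ⟨p⟩ := hH.isConnected.preconnected v u
    cases p with
    | nil => exact absurd rfl hu.symm
    | cons h _ =>
      rw [Nat.one_le_iff_ne_zero, ← Nat.pos_iff_ne_zero, H.degree_pos_iff_exists_adj]
      exact ⟨_, h⟩
  have htot : ∑ v, H.degree v + 2 = 2 * Fintype.card V := by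
    have h1 := H.sum_degrees_eq_twice_card_edges
    have h2 := hH.card_edgeFinset
    omega
  have hcardc : A.card + Aᶜ.card = Fintype.card V := by
    simpa using A.card_add_card_compl
  have key : A.Nonempty → ∑ v ∈ A, H.degree v + 1 ≤ 2 * A.card := by
    intro hA
    obtain ⟨w, hw⟩ := hdeg
    have hsplit : ∑ v ∈ A, H.degree v + ∑ v ∈ Aᶜ, H.degree v = ∑ v, H.degree v :=
      A.sum_add_sum_compl _
    suffices hsuf : 2 * Aᶜ.card ≤ ∑ v ∈ Aᶜ, H.degree v + 1 by omega
    by_cases hn : 2 ≤ Fintype.card V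
    · by_cases hwA : w ∈ Aᶜ
      · have he : ∑ v ∈ Aᶜ, H.degree v = H.degree w + ∑ v ∈ Aᶜ.erase w, H.degree v :=
          (Finset.add_sum_erase _ _ hwA).symm
        have h2 : (Aᶜ.erase w).card • 2 ≤ ∑ v ∈ Aᶜ.erase w, H.degree v :=
          Finset.card_nsmul_le_sum _ _ _ (fun v hv =>
            hw v (Finset.mem_of_mem_erase hv) (Finset.ne_of_mem_erase hv))
        have h3 : (Aᶜ.erase w).card = Aᶜ.card - 1 := Finset.card_erase_of_mem hwA
        have h4 := hpos hn w
        have h5 : 1 ≤ Aᶜ.card := Finset.card_pos.mpr ⟨w, hwA⟩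
        simp only [smul_eq_mul] at h2
        omega
      · have h2 : Aᶜ.card • 2 ≤ ∑ v ∈ Aᶜ, H.degree v :=
          Finset.card_nsmul_le_sum _ _ _ (fun v hv =>
            hw v hv (by rintro rfl; exact hwA hv))
        simp only [smul_eq_mul] at h2
        omega
    · have hA1 : 1 ≤ A.card := Finset.card_pos.mpr hA
      have : Aᶜ.card = 0 := by omega
      rw [Finset.card_eq_zero] at this
      simp [this]
  constructor
  · rcases A.eq_empty_or_nonempty with rfl | hA
    · simp
    · have h := key hA
      omega
  · intro C Chat hdisj hun m hm hC
    have hcard : C.card + Chat.card = A.card := by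
      rw [← hun, Finset.card_union_of_disjoint hdisj]
    rcases A.eq_empty_or_nonempty with rfl | hA
    · rw [Finset.union_eq_empty] at hun
      simp [hun.1, hun.2]
    · have hnat : ∑ v ∈ C, H.degree v + ∑ v ∈ Chat, H.degree v + 1
          ≤ 2 * C.card + 2 * Chat.card := by
        have h := key hA
        rw [← hun, Finset.sum_union hdisj, Finset.card_union_of_disjoint hdisj] at h
        omega
      have hm1 : (1:ℝ) ≤ (m:ℝ) - 1 := by
        have : (2:ℝ) ≤ (m:ℝ) := by exact_mod_cast hm
        linarith
      have hCm : (C.card : ℝ) ≤ (m:ℝ) - 1 := by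
        have h := Nat.cast_le (α := ℝ) |>.mpr hC
        rwa [Nat.cast_sub (by omega), Nat.cast_one] at h
      have hfrac : (C.card : ℝ) / ((m:ℝ) - 1) ≤ 1 :=
        (div_le_one (by linarith)).mpr hCm
      have hreal : (∑ v ∈ C, (H.degree v : ℝ)) + ∑ v ∈ Chat, (H.degree v : ℝ) + 1
          ≤ 2 * C.card + 2 * Chat.card := by
        exact_mod_cast hnat
      have hexp : (2 - 1 / ((m : ℝ) - 1)) * C.card
          = 2 * C.card - (C.card : ℝ) / ((m:ℝ) - 1) := by ring
      rw [hexp]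
      linarith
end
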